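/- arXiv:2009.11452 — 4 statements merged into one kernel-verified Lean document; each statement's English description precedes it below -/
import Mathlib

section
/- Let Z be a nonempty set and ρ : Z × Z → ℝ a semi-metric (symmetric, nonnegative, vanishing on the diagonal). Then ρ is of negative type if and only if for every λ > 0 the function (z,z') ↦ exp(−λ ρ(z,z')) is a positive definite kernel on Z, i.e., for every n ≥ 1, all z₁,…,zₙ ∈ Z and all real c₁,…,cₙ, ∑_{i=1}^n ∑_{j=1}^n c_i c_j exp(−λ ρ(z_i, z_j)) ≥ 0. -/
open Finset Matrix

section
open scoped MatrixOrder

noncomputable def Matrix.PosSemidef.sqrt {n : ℕ} {M : Matrix (Fin n) (Fin n) ℝ}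
    (_ : M.PosSemidef) : Matrix (Fin n) (Fin n) ℝ := CFC.sqrt M

lemma Matrix.PosSemidef.sqrt_mul_self {n : ℕ} {M : Matrix (Fin n) (Fin n) ℝ}
    (hM : M.PosSemidef) : hM.sqrt * hM.sqrt = M :=
  CFC.sqrt_mul_sqrt_self M hM.nonneg

lemma Matrix.PosSemidef.posSemidef_sqrt {n : ℕ} {M : Matrix (Fin n) (Fin n) ℝ}
    (hM : M.PosSemidef) : hM.sqrt.PosSemidef :=
  (CFC.sqrt_nonneg M).posSemidef

end

/-- PSD kernel predicate on `Fin n`. -/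
def PSDK {n : ℕ} (K : Fin n → Fin n → ℝ) : Prop :=
  ∀ c : Fin n → ℝ, 0 ≤ ∑ i, ∑ j, c i * c j * K i j

lemma psdk_gram {n : ℕ} {K : Fin n → Fin n → ℝ} (hK : PSDK K)
    (hKsymm : ∀ i j, K i j = K j i) :
    ∃ S : Fin n → Fin n → ℝ, ∀ i j, K i j = ∑ k, S i k * S j k := by
  set M : Matrix (Fin n) (Fin n) ℝ := Matrix.of K with hM
  have hPSD : M.PosSemidef := by
    refine Matrix.PosSemidef.of_dotProduct_mulVec_nonneg ?_ ?_
    · ext i j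
      simp [Matrix.conjTranspose, hM, hKsymm i j]
    · intro x
      have : x ⬝ᵥ M.mulVec x = ∑ i, ∑ j, x i * x j * K i j := by
        simp [dotProduct, Matrix.mulVec, Finset.mul_sum, hM]
        congr 1; ext i; congr 1; ext j; ring
      simpa [this] using hK x
  refine ⟨fun i k => hPSD.sqrt i k, fun i j => ?_⟩
  have h1 : M = hPSD.sqrt * hPSD.sqrt := hPSD.sqrt_mul_self.symm
  have hsym : ∀ a b, hPSD.sqrt a b = hPSD.sqrt b a := by
    intro a b
    have h := congrFun (congrFun hPSD.posSemidef_sqrt.1 a) b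
    simpa [Matrix.conjTranspose_apply] using h.symm
  calc K i j = (hPSD.sqrt * hPSD.sqrt) i j := by rw [← h1]; rfl
    _ = ∑ k, hPSD.sqrt i k * hPSD.sqrt k j := rfl
    _ = ∑ k, hPSD.sqrt i k * hPSD.sqrt j k := by
        exact Finset.sum_congr rfl fun k _ => by rw [hsym k j]

lemma psdk_mul {n : ℕ} {K L : Fin n → Fin n → ℝ} (hK : PSDK K)
    (hKsymm : ∀ i j, K i j = K j i) (hL : PSDK L) :
    PSDK (fun i j => K i j * L i j) := by
  obtain ⟨S, hS⟩ := psdk_gram hK hKsymm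
  intro c
  have h1 : ∑ i, ∑ j, c i * c j * (K i j * L i j)
      = ∑ i, ∑ j, ∑ k, (c i * S i k) * (c j * S j k) * L i j := by
    refine Finset.sum_congr rfl fun i _ => Finset.sum_congr rfl fun j _ => ?_
    rw [hS i j, Finset.sum_mul, Finset.mul_sum]
    refine Finset.sum_congr rfl fun k _ => ?_
    ring
  have h2 : ∑ i, ∑ j, ∑ k, (c i * S i k) * (c j * S j k) * L i j
      = ∑ k, ∑ i, ∑ j, (c i * S i k) * (c j * S j k) * L i j := by
    rw [show (∑ i, ∑ j, ∑ k, (c i * S i k) * (c j * S j k) * L i j : ℝ)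
        = ∑ i, ∑ k, ∑ j, (c i * S i k) * (c j * S j k) * L i j from
      Finset.sum_congr rfl fun i _ => Finset.sum_comm, Finset.sum_comm]
  rw [h1, h2]
  exact Finset.sum_nonneg fun k _ => hL fun i => c i * S i k

lemma psdk_pow {n : ℕ} {K : Fin n → Fin n → ℝ} (hK : PSDK K)
    (hKsymm : ∀ i j, K i j = K j i) (m : ℕ) :
    PSDK (fun i j => K i j ^ m) := by
  induction m with
  | zero =>
    intro c
    simp only [pow_zero, mul_one]
    have : ∑ i, ∑ j, c i * c j = (∑ i, c i) * (∑ j, c j) := by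
      rw [Finset.sum_mul]
      exact Finset.sum_congr rfl fun i _ => (Finset.mul_sum _ _ _).symm
    rw [this]
    exact mul_self_nonneg _
  | succ m ih =>
    have := psdk_mul hK hKsymm ih
    intro c
    have h := this c
    simpa [pow_succ, mul_comm] using h

lemma psdk_exp {n : ℕ} {K : Fin n → Fin n → ℝ} (hK : PSDK K)
    (hKsymm : ∀ i j, K i j = K j i) :
    PSDK (fun i j => Real.exp (K i j)) := by
  intro c
  have hexp : ∀ x : ℝ, Real.exp x = ∑' m : ℕ, x ^ m / m.factorial := by
    intro x
    rw [Real.exp_eq_exp_ℝ, NormedSpace.exp_eq_tsum_div]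
  have hsummable : ∀ i j : Fin n, Summable (fun m : ℕ => c i * c j * (K i j ^ m / m.factorial)) :=
    fun i j => (Real.summable_pow_div_factorial (K i j)).mul_left _
  calc (0:ℝ) ≤ ∑' m : ℕ, ∑ i, ∑ j, c i * c j * (K i j ^ m / m.factorial) := by
        refine tsum_nonneg fun m => ?_
        have h := psdk_pow hK hKsymm m c
        have : ∑ i, ∑ j, c i * c j * (K i j ^ m / (m.factorial : ℝ))
            = (∑ i, ∑ j, c i * c j * K i j ^ m) / m.factorial := by
          rw [Finset.sum_div]
          refine Finset.sum_congr rfl fun i _ => ?_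
          rw [Finset.sum_div]
          refine Finset.sum_congr rfl fun j _ => ?_
          ring
        rw [this]
        exact div_nonneg h (Nat.cast_nonneg _)
    _ = ∑ i, ∑ j, ∑' m : ℕ, c i * c j * (K i j ^ m / m.factorial) := by
        rw [Summable.tsum_finsetSum]
        · refine Finset.sum_congr rfl fun i _ => ?_
          rw [Summable.tsum_finsetSum]
          intro j _; exact hsummable i j
        · intro i _
          exact (hasSum_sum fun j _ => (hsummable i j).hasSum).summable
    _ = ∑ i, ∑ j, c i * c j * Real.exp (K i j) := by
        refine Finset.sum_congr rfl fun i _ => ?_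
        refine Finset.sum_congr rfl fun j _ => ?_
        rw [hexp, tsum_mul_left]

/-- A semi-metric `ρ` is of negative type if and only if for every
`λ > 0` the kernel `(z,z') ↦ exp(−λ ρ(z,z'))` is positive definite. -/
theorem negtype_iff_exp_posdef {Z : Type*} [Nonempty Z] (ρ : Z → Z → ℝ)
    (hsymm : ∀ z z', ρ z z' = ρ z' z)
    (hnonneg : ∀ z z', 0 ≤ ρ z z')
    (hdiag : ∀ z, ρ z z = 0) :
    (∀ (n : ℕ), 2 ≤ n → ∀ (z : Fin n → Z) (a : Fin n → ℝ),
      (∑ i, a i) = 0 → ∑ i, ∑ j, a i * a j * ρ (z i) (z j) ≤ 0) ↔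
    (∀ l : ℝ, 0 < l → ∀ (n : ℕ), 1 ≤ n → ∀ (z : Fin n → Z) (c : Fin n → ℝ),
      0 ≤ ∑ i, ∑ j, c i * c j * Real.exp (-l * ρ (z i) (z j))) := by
  constructor
  · -- negative type → exp kernel PSD
    intro hneg l hl n hn z c
    obtain ⟨n, rfl⟩ : ∃ m, n = m + 1 := ⟨n - 1, (Nat.succ_pred_eq_of_pos hn).symm⟩
    set z₀ : Z := z 0 with hz₀
    set K : Fin (n+1) → Fin (n+1) → ℝ :=
      fun i j => l * (ρ (z i) z₀ + ρ (z j) z₀ - ρ (z i) (z j)) with hKdef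
    have hKsymm : ∀ i j, K i j = K j i := by
      intro i j; simp only [hKdef]; rw [hsymm (z i) (z j)]; ring
    have hKpsd : PSDK K := by
      intro d
      set S := ∑ i, d i with hS
      set U := ∑ i, d i * ρ (z i) z₀ with hU
      set T := ∑ i, ∑ j, d i * d j * ρ (z i) (z j) with hT
      -- apply negative type with n+2 points: z₀ then z
      set a : Fin (n+2) → ℝ := Fin.cons (-S) d with ha
      set w : Fin (n+2) → Z := Fin.cons z₀ z with hw
      have hsum : (∑ i, a i) = 0 := by
        rw [ha, Fin.sum_cons, ← hS]; ring
      have h := hneg (n+2) (by omega) w a hsum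
      have hexp : ∑ i, ∑ j, a i * a j * ρ (w i) (w j) = T - 2 * S * U := by
        rw [Fin.sum_univ_succ]
        have h1 : ∑ j, a 0 * a j * ρ (w 0) (w j) = -S * U := by
          rw [Fin.sum_univ_succ]
          simp only [ha, hw, Fin.cons_zero, Fin.cons_succ, hdiag, mul_zero, zero_add]
          rw [hU, Finset.mul_sum]
          exact Finset.sum_congr rfl fun j _ => by rw [hsymm z₀ (z j)]; ring
        rw [h1]
        have h2 : ∀ i : Fin (n+1), ∑ j, a i.succ * a j * ρ (w i.succ) (w j)
            = d i * (-S) * ρ (z i) z₀ + ∑ j, d i * d j * ρ (z i) (z j) := by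
          intro i
          rw [Fin.sum_univ_succ]
          simp only [ha, hw, Fin.cons_zero, Fin.cons_succ]
        rw [Finset.sum_congr rfl fun i _ => h2 i, Finset.sum_add_distrib]
        have h3 : ∑ i, d i * (-S) * ρ (z i) z₀ = -S * U := by
          rw [hU, Finset.mul_sum]
          exact Finset.sum_congr rfl fun i _ => by ring
        rw [h3, ← hT]; ring
      rw [hexp] at h
      -- the two cross-term identities
      have idA : ∑ i, ∑ j, d i * d j * ρ (z i) z₀ = U * S := by
        have e : ∀ i : Fin (n+1), ∑ j, d i * d j * ρ (z i) z₀ = (d i * ρ (z i) z₀) * S := by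
          intro i; rw [hS, Finset.mul_sum]
          exact Finset.sum_congr rfl fun j _ => by ring
        rw [Finset.sum_congr rfl fun i _ => e i, ← Finset.sum_mul, ← hU]
      have idB : ∑ i, ∑ j, d i * d j * ρ (z j) z₀ = S * U := by
        have e : ∀ i : Fin (n+1), ∑ j, d i * d j * ρ (z j) z₀ = d i * U := by
          intro i; rw [hU, Finset.mul_sum]
          exact Finset.sum_congr rfl fun j _ => by ring
        rw [Finset.sum_congr rfl fun i _ => e i, ← Finset.sum_mul, ← hS]
      have hKexp : ∑ i, ∑ j, d i * d j * K i j = l * (2 * S * U - T) := by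
        have step : ∑ i, ∑ j, d i * d j * K i j
            = (∑ i, ∑ j, l * (d i * d j * ρ (z i) z₀))
              + (∑ i, ∑ j, l * (d i * d j * ρ (z j) z₀))
              - (∑ i, ∑ j, l * (d i * d j * ρ (z i) (z j))) := by
          simp only [← Finset.sum_add_distrib, ← Finset.sum_sub_distrib]
          refine Finset.sum_congr rfl fun i _ => Finset.sum_congr rfl fun j _ => ?_
          simp only [hKdef]; ring
        rw [step]
        simp only [← Finset.mul_sum]
        rw [idA, idB, ← hT]; ring
      rw [hKexp]
      nlinarith [h, le_of_lt hl]
    -- exp kernel PSD ⇒ conclusion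
    have hexpK := psdk_exp hKpsd hKsymm
    set d : Fin (n+1) → ℝ := fun i => c i * Real.exp (-l * ρ (z i) z₀) with hd
    have h := hexpK d
    have heq : ∑ i, ∑ j, d i * d j * Real.exp (K i j)
        = ∑ i, ∑ j, c i * c j * Real.exp (-l * ρ (z i) (z j)) := by
      refine Finset.sum_congr rfl fun i _ => Finset.sum_congr rfl fun j _ => ?_
      simp only [hd, hKdef]
      rw [show (-l * ρ (z i) (z j))
          = (-l * ρ (z i) z₀) + (-l * ρ (z j) z₀)
            + (l * (ρ (z i) z₀ + ρ (z j) z₀ - ρ (z i) (z j))) from by ring,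
        Real.exp_add, Real.exp_add]
      ring
    rwa [heq] at h
  · -- exp kernel PSD for all l → negative type
    intro hpd n hn z a hsum
    have key : ∀ l : ℝ, 0 < l →
        ∑ i, ∑ j, a i * a j * ((1 - Real.exp (-l * ρ (z i) (z j))) / l) ≤ 0 := by
      intro l hl
      have h1 := hpd l hl n (by omega) z a
      have h2 : ∑ i, ∑ j, a i * a j * ((1 - Real.exp (-l * ρ (z i) (z j))) / l)
          = ((∑ i, ∑ j, a i * a j)
              - ∑ i, ∑ j, a i * a j * Real.exp (-l * ρ (z i) (z j))) / l := by
        rw [← Finset.sum_sub_distrib, Finset.sum_div]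
        refine Finset.sum_congr rfl fun i _ => ?_
        rw [← Finset.sum_sub_distrib, Finset.sum_div]
        exact Finset.sum_congr rfl fun j _ => by ring
      have h3 : ∑ i, ∑ j, a i * a j = 0 := by
        have : ∑ i, ∑ j, a i * a j = (∑ i, a i) * (∑ j, a j) := by
          rw [Finset.sum_mul]
          exact Finset.sum_congr rfl fun i _ => (Finset.mul_sum _ _ _).symm
        rw [this, hsum, zero_mul]
      rw [h2, h3]
      apply div_nonpos_of_nonpos_of_nonneg _ (le_of_lt hl)
      linarith
    have hlim : Filter.Tendsto
        (fun l => ∑ i, ∑ j, a i * a j * ((1 - Real.exp (-l * ρ (z i) (z j))) / l))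
        (nhdsWithin 0 (Set.Ioi 0)) (nhds (∑ i, ∑ j, a i * a j * ρ (z i) (z j))) := by
      apply tendsto_finset_sum
      intro i _
      apply tendsto_finset_sum
      intro j _
      have hder : Filter.Tendsto (fun l => (1 - Real.exp (-l * ρ (z i) (z j))) / l)
          (nhdsWithin 0 (Set.Ioi 0)) (nhds (ρ (z i) (z j))) := by
        have hD : HasDerivAt (fun l : ℝ => 1 - Real.exp (-l * ρ (z i) (z j)))
            (ρ (z i) (z j)) 0 := by
          have h0 : HasDerivAt (fun l : ℝ => -l * ρ (z i) (z j)) (-ρ (z i) (z j)) 0 := by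
            simpa using ((hasDerivAt_id (0:ℝ)).neg.mul_const (ρ (z i) (z j)))
          have := (h0.exp).const_sub 1
          simpa using this
        have hslope := (hD.hasDerivWithinAt (s := Set.Ioi 0))
        rw [hasDerivWithinAt_iff_tendsto_slope] at hslope
        have hsub : Set.Ioi (0:ℝ) \ {0} = Set.Ioi 0 := by
          ext x; simp only [Set.mem_diff, Set.mem_Ioi, Set.mem_singleton_iff]
          exact ⟨fun h => h.1, fun h => ⟨h, ne_of_gt h⟩⟩
        rw [hsub] at hslope
        refine hslope.congr fun l => ?_
        rw [slope_def_field]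
        simp [Real.exp_zero]
      exact hder.const_mul _
    exact le_of_tendsto hlim
      (Filter.eventually_of_mem self_mem_nhdsWithin fun l hl => key l hl)
end

section
/- Let Z be a nonempty set and ρ : Z × Z → ℝ a semi-metric (symmetric, nonnegative, vanishing on the diagonal). Then ρ is of negative type if and only if (Z, ρ) is embeddable in a Hilbert space as squared distance, i.e., there exist a real inner product space H and a map φ : Z → H such that ρ(z,z') = ‖φ(z) − φ(z')‖² for all z, z' ∈ Z. -/
universe u

open Finset

namespace NegTypeAux

variable {Z : Type u}

noncomputable def Kf (ρ : Z → Z → ℝ) (z₀ : Z) (z w : Z) : ℝ :=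
  (ρ z z₀ + ρ w z₀ - ρ z w) / 2

noncomputable def B (ρ : Z → Z → ℝ) (z₀ : Z) : (Z →₀ ℝ) →ₗ[ℝ] (Z →₀ ℝ) →ₗ[ℝ] ℝ :=
  Finsupp.lsum ℝ fun z => LinearMap.toSpanSingleton ℝ ((Z →₀ ℝ) →ₗ[ℝ] ℝ)
    (Finsupp.lsum ℝ fun w => LinearMap.toSpanSingleton ℝ ℝ (Kf ρ z₀ z w))

lemma B_eq (ρ : Z → Z → ℝ) (z₀ : Z) (f g : Z →₀ ℝ) (s t : Finset Z)
    (hs : f.support ⊆ s) (ht : g.support ⊆ t) :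
    B ρ z₀ f g = ∑ z ∈ s, ∑ w ∈ t, f z * g w * Kf ρ z₀ z w := by
  have h1 : B ρ z₀ f g = ∑ z ∈ f.support, ∑ w ∈ g.support, f z * g w * Kf ρ z₀ z w := by
    simp [B, Finsupp.lsum_apply, Finsupp.sum, Finsupp.sum_apply', LinearMap.toSpanSingleton_apply,
      smul_eq_mul, Finset.mul_sum, mul_assoc]
  rw [h1]
  calc ∑ z ∈ f.support, ∑ w ∈ g.support, f z * g w * Kf ρ z₀ z w
      = ∑ z ∈ s, ∑ w ∈ g.support, f z * g w * Kf ρ z₀ z w :=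
        Finset.sum_subset hs (fun z _ hz => by
          simp [Finsupp.notMem_support_iff.mp hz])
    _ = ∑ z ∈ s, ∑ w ∈ t, f z * g w * Kf ρ z₀ z w :=
        Finset.sum_congr rfl fun z _ => Finset.sum_subset ht (fun w _ hw => by
          simp [Finsupp.notMem_support_iff.mp hw])

lemma B_single (ρ : Z → Z → ℝ) (z₀ : Z) (z w : Z) :
    B ρ z₀ (Finsupp.single z 1) (Finsupp.single w 1) = Kf ρ z₀ z w := by
  simp [B, Finsupp.lsum_single, LinearMap.toSpanSingleton_apply]

lemma B_symm (ρ : Z → Z → ℝ) (z₀ : Z) (hsymm : ∀ z z', ρ z z' = ρ z' z) (f g : Z →₀ ℝ) :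
    B ρ z₀ f g = B ρ z₀ g f := by
  classical
  rw [B_eq ρ z₀ f g (f.support ∪ g.support) (f.support ∪ g.support)
      Finset.subset_union_left Finset.subset_union_right,
    B_eq ρ z₀ g f (f.support ∪ g.support) (f.support ∪ g.support)
      Finset.subset_union_right Finset.subset_union_left,
    Finset.sum_comm]
  refine Finset.sum_congr rfl fun w _ => Finset.sum_congr rfl fun z _ => ?_
  simp only [Kf]
  rw [hsymm z w]
  ring

variable [Nonempty Z]

lemma fin_negtype (ρ : Z → Z → ℝ)
    (h : ∀ (n : ℕ), 2 ≤ n → ∀ (z : Fin n → Z) (a : Fin n → ℝ),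
      (∑ i, a i) = 0 → ∑ i, ∑ j, a i * a j * ρ (z i) (z j) ≤ 0)
    (n : ℕ) (z : Fin n → Z) (a : Fin n → ℝ) (ha : (∑ i, a i) = 0) :
    ∑ i, ∑ j, a i * a j * ρ (z i) (z j) ≤ 0 := by
  classical
  obtain ⟨z₀⟩ := ‹Nonempty Z›
  set g : ℕ → ℝ := fun i => if h : i < n then a ⟨i, h⟩ else 0 with hg
  set y : ℕ → Z := fun i => if h : i < n then z ⟨i, h⟩ else z₀ with hy
  have hgz : ∀ i, n ≤ i → g i = 0 := fun i hi => by simp [hg, Nat.not_lt.mpr hi]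
  have key := h (n + 2) (by omega) (fun i => y i) (fun i => g i) ?_
  · calc ∑ i : Fin n, ∑ j : Fin n, a i * a j * ρ (z i) (z j)
        = ∑ i ∈ range n, ∑ j ∈ range n, g i * g j * ρ (y i) (y j) := by
          rw [← Fin.sum_univ_eq_sum_range (fun i => ∑ j ∈ range n, g i * g j * ρ (y i) (y j)) n]
          refine Finset.sum_congr rfl fun i _ => ?_
          rw [← Fin.sum_univ_eq_sum_range (fun j => g i * g j * ρ (y i) (y j)) n]
          refine Finset.sum_congr rfl fun j _ => ?_
          simp [hg, hy, i.isLt, j.isLt]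
      _ = ∑ i ∈ range (n+2), ∑ j ∈ range (n+2), g i * g j * ρ (y i) (y j) := by
          have hsub : range n ⊆ range (n+2) := Finset.range_subset_range.mpr (by omega)
          have step1 : ∀ i ∈ range (n+2), ∑ j ∈ range n, g i * g j * ρ (y i) (y j)
              = ∑ j ∈ range (n+2), g i * g j * ρ (y i) (y j) := fun i _ =>
            Finset.sum_subset hsub (fun j _ hjs => by
              have : n ≤ j := by simp [Finset.mem_range] at hjs; omega
              simp [hgz j this])
          have step2 : ∑ i ∈ range n, ∑ j ∈ range n, g i * g j * ρ (y i) (y j)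
              = ∑ i ∈ range (n+2), ∑ j ∈ range n, g i * g j * ρ (y i) (y j) :=
            Finset.sum_subset hsub (fun i _ his => by
              have : n ≤ i := by simp [Finset.mem_range] at his; omega
              exact Finset.sum_eq_zero fun j _ => by simp [hgz i this])
          rw [step2]
          exact Finset.sum_congr rfl step1
      _ = ∑ i : Fin (n+2), ∑ j : Fin (n+2), g i * g j * ρ (y i) (y j) := by
          rw [← Fin.sum_univ_eq_sum_range
            (fun i => ∑ j ∈ range (n+2), g i * g j * ρ (y i) (y j)) (n+2)]
          exact Finset.sum_congr rfl fun i _ =>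
            (Fin.sum_univ_eq_sum_range (fun j => g i * g j * ρ (y i) (y j)) (n+2)).symm
      _ ≤ 0 := key
  · rw [Fin.sum_univ_eq_sum_range (fun i => g i) (n+2),
      ← Finset.sum_subset (Finset.range_subset_range.mpr (show n ≤ n + 2 by omega))
        (fun i _ his => hgz i (by simp [Finset.mem_range] at his; omega)),
      ← Fin.sum_univ_eq_sum_range (fun i => g i) n, ← ha]
    exact Finset.sum_congr rfl fun i _ => by simp [hg, i.isLt]

lemma finset_negtype (ρ : Z → Z → ℝ)
    (h : ∀ (n : ℕ), 2 ≤ n → ∀ (z : Fin n → Z) (a : Fin n → ℝ),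
      (∑ i, a i) = 0 → ∑ i, ∑ j, a i * a j * ρ (z i) (z j) ≤ 0)
    (s : Finset Z) (a : Z → ℝ) (ha : ∑ z ∈ s, a z = 0) :
    ∑ z ∈ s, ∑ w ∈ s, a z * a w * ρ z w ≤ 0 := by
  classical
  have e := s.equivFin
  have hz : ∀ (F : Z → ℝ), ∑ i : Fin s.card, F (e.symm i : Z) = ∑ z ∈ s, F z := by
    intro F
    rw [Equiv.sum_comp e.symm (fun x : s => F (x : Z))]
    exact Finset.sum_attach s F
  have key := fin_negtype ρ h s.card (fun i => (e.symm i : Z)) (fun i => a (e.symm i : Z))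
    (by rw [hz (fun z => a z)]; exact ha)
  calc ∑ z ∈ s, ∑ w ∈ s, a z * a w * ρ z w
      = ∑ i : Fin s.card, ∑ w ∈ s, a (e.symm i : Z) * a w * ρ (e.symm i : Z) w :=
        (hz (fun z => ∑ w ∈ s, a z * a w * ρ z w)).symm
    _ = ∑ i : Fin s.card, ∑ j : Fin s.card,
          a (e.symm i : Z) * a (e.symm j : Z) * ρ (e.symm i : Z) (e.symm j : Z) :=
        Finset.sum_congr rfl fun i _ =>
          (hz (fun w => a (e.symm i : Z) * a w * ρ (e.symm i : Z) w)).symm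
    _ ≤ 0 := key

omit [Nonempty Z] in
lemma B_nonneg_aux (ρ : Z → Z → ℝ) (z₀ : Z)
    (hsymm : ∀ z z', ρ z z' = ρ z' z) (hdiag : ∀ z, ρ z z = 0)
    (negtype : ∀ (s : Finset Z) (a : Z → ℝ), (∑ z ∈ s, a z = 0) →
      ∑ z ∈ s, ∑ w ∈ s, a z * a w * ρ z w ≤ 0)
    (f : Z →₀ ℝ) (s : Finset Z) (hz₀s : z₀ ∈ s) :
    0 ≤ ∑ z ∈ s, ∑ w ∈ s, f z * f w * Kf ρ z₀ z w := by
  classical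
  set T := ∑ z ∈ s, f z with hT
  set R := ∑ z ∈ s, f z * ρ z z₀ with hR
  set d : Z → ℝ := fun z => if z = z₀ then T else 0 with hd
  set a : Z → ℝ := fun z => f z - d z with haf
  set Sff := ∑ z ∈ s, ∑ w ∈ s, f z * f w * ρ z w with hSff
  have hsum_a : ∑ z ∈ s, a z = 0 := by
    simp only [haf, Finset.sum_sub_distrib, hd]
    rw [Finset.sum_ite_eq' s z₀ (fun _ => T)]
    simp [hz₀s, hT]
  have e1 : ∑ z ∈ s, ∑ w ∈ s, f z * d w * ρ z w = T * R := by
    have h1 : ∀ z ∈ s, ∑ w ∈ s, f z * d w * ρ z w = f z * T * ρ z z₀ := by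
      intro z _
      have : ∀ w, f z * d w * ρ z w = if w = z₀ then f z * T * ρ z w else 0 := by
        intro w; simp only [hd]; split <;> simp
      rw [Finset.sum_congr rfl (fun w _ => this w),
        Finset.sum_ite_eq' s z₀ (fun w => f z * T * ρ z w)]
      simp [hz₀s]
    rw [Finset.sum_congr rfl h1, Finset.mul_sum]
    exact Finset.sum_congr rfl fun z _ => by ring
  have e2 : ∑ z ∈ s, ∑ w ∈ s, d z * f w * ρ z w = T * R := by
    rw [Finset.sum_comm, ← e1]
    exact Finset.sum_congr rfl fun w _ => Finset.sum_congr rfl fun z _ => by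
      rw [hsymm w z]; ring
  have e3 : ∑ z ∈ s, ∑ w ∈ s, d z * d w * ρ z w = 0 := by
    have h1 : ∀ z ∈ s, ∑ w ∈ s, d z * d w * ρ z w = d z * T * ρ z z₀ := by
      intro z _
      have : ∀ w, d z * d w * ρ z w = if w = z₀ then d z * T * ρ z w else 0 := by
        intro w; simp only [hd]; split <;> simp
      rw [Finset.sum_congr rfl (fun w _ => this w),
        Finset.sum_ite_eq' s z₀ (fun w => d z * T * ρ z w)]
      simp [hz₀s]
    rw [Finset.sum_congr rfl h1]
    have : ∀ z, d z * T * ρ z z₀ = if z = z₀ then T * T * ρ z z₀ else 0 := by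
      intro z; simp only [hd]; split <;> simp [mul_comm]
    rw [Finset.sum_congr rfl (fun z _ => this z),
      Finset.sum_ite_eq' s z₀ (fun z => T * T * ρ z z₀)]
    simp [hz₀s, hdiag]
  have hD : Sff - 2 * (T * R) ≤ 0 := by
    have expand : ∀ z w, a z * a w * ρ z w
        = f z * f w * ρ z w - f z * d w * ρ z w - (d z * f w * ρ z w - d z * d w * ρ z w) := by
      intro z w; simp only [haf]; ring
    have hneg := negtype s a hsum_a
    have hsplit : ∑ z ∈ s, ∑ w ∈ s, a z * a w * ρ z w
        = Sff - (∑ z ∈ s, ∑ w ∈ s, f z * d w * ρ z w)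
          - ((∑ z ∈ s, ∑ w ∈ s, d z * f w * ρ z w)
            - (∑ z ∈ s, ∑ w ∈ s, d z * d w * ρ z w)) := by
      rw [hSff]
      simp only [← Finset.sum_sub_distrib]
      exact Finset.sum_congr rfl fun z _ => Finset.sum_congr rfl fun w _ => expand z w
    linarith [hsplit, e1, e2, e3, hneg]
  have q1 : ∑ z ∈ s, ∑ w ∈ s, f z * f w * ρ z z₀ = T * R := by
    have h1 : ∀ z ∈ s, ∑ w ∈ s, f z * f w * ρ z z₀ = (f z * ρ z z₀) * T := by
      intro z _
      rw [hT, Finset.mul_sum]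
      exact Finset.sum_congr rfl fun w _ => by ring
    rw [Finset.sum_congr rfl h1, ← Finset.sum_mul, ← hR, mul_comm]
  have q2 : ∑ z ∈ s, ∑ w ∈ s, f z * f w * ρ w z₀ = T * R := by
    have h1 : ∀ z ∈ s, ∑ w ∈ s, f z * f w * ρ w z₀ = f z * R := by
      intro z _
      rw [hR, Finset.mul_sum]
      exact Finset.sum_congr rfl fun w _ => by ring
    rw [Finset.sum_congr rfl h1, ← Finset.sum_mul, ← hT]
  have eB : 2 * (∑ z ∈ s, ∑ w ∈ s, f z * f w * Kf ρ z₀ z w)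
      = (∑ z ∈ s, ∑ w ∈ s, f z * f w * ρ z z₀)
        + (∑ z ∈ s, ∑ w ∈ s, f z * f w * ρ w z₀) - Sff := by
    rw [hSff, Finset.mul_sum]
    simp only [Finset.mul_sum, ← Finset.sum_add_distrib, ← Finset.sum_sub_distrib]
    exact Finset.sum_congr rfl fun z _ => Finset.sum_congr rfl fun w _ => by
      simp only [Kf]; ring
  linarith [eB, q1, q2, hD]

omit [Nonempty Z] in
lemma B_nonneg (ρ : Z → Z → ℝ) (z₀ : Z)
    (hsymm : ∀ z z', ρ z z' = ρ z' z) (hdiag : ∀ z, ρ z z = 0)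
    (negtype : ∀ (s : Finset Z) (a : Z → ℝ), (∑ z ∈ s, a z = 0) →
      ∑ z ∈ s, ∑ w ∈ s, a z * a w * ρ z w ≤ 0)
    (f : Z →₀ ℝ) : 0 ≤ B ρ z₀ f f := by
  classical
  rw [B_eq ρ z₀ f f (insert z₀ f.support) (insert z₀ f.support)
    (Finset.subset_insert _ _) (Finset.subset_insert _ _)]
  exact B_nonneg_aux ρ z₀ hsymm hdiag negtype f _ (Finset.mem_insert_self _ _)

end NegTypeAux

/-- A semi-metric `ρ` is of negative type if and only if `(Z, ρ)`
embeds into a real inner product space as squared distance: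
`ρ(z,z') = ‖φ(z) − φ(z')‖²`. -/
theorem negtype_iff_hilbert_embeddable {Z : Type u} [Nonempty Z] (ρ : Z → Z → ℝ)
    (hsymm : ∀ z z', ρ z z' = ρ z' z)
    (hnonneg : ∀ z z', 0 ≤ ρ z z')
    (hdiag : ∀ z, ρ z z = 0) :
    (∀ (n : ℕ), 2 ≤ n → ∀ (z : Fin n → Z) (a : Fin n → ℝ),
      (∑ i, a i) = 0 → ∑ i, ∑ j, a i * a j * ρ (z i) (z j) ≤ 0) ↔
    (∃ (H : Type u) (_ : NormedAddCommGroup H) (_ : InnerProductSpace ℝ H)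
      (φ : Z → H), ∀ z z', ρ z z' = ‖φ z - φ z'‖ ^ 2) := by
  classical
  constructor
  · intro hneg
    obtain ⟨z₀⟩ := ‹Nonempty Z›
    have negS := NegTypeAux.finset_negtype ρ hneg
    letI c : PreInnerProductSpace.Core ℝ (Z →₀ ℝ) :=
      { inner := fun f g => NegTypeAux.B ρ z₀ f g
        conj_inner_symm := fun f g => by
          simpa using NegTypeAux.B_symm ρ z₀ hsymm g f
        re_inner_nonneg := fun f => by
          simpa using NegTypeAux.B_nonneg ρ z₀ hsymm hdiag negS f
        add_left := fun x y w => by simp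
        smul_left := fun x y r => by simp }
    letI : SeminormedAddCommGroup (Z →₀ ℝ) :=
      InnerProductSpace.Core.toSeminormedAddCommGroup (𝕜 := ℝ) (F := Z →₀ ℝ)
    letI ns : NormedSpace ℝ (Z →₀ ℝ) :=
      InnerProductSpace.Core.toNormedSpace (𝕜 := ℝ) (F := Z →₀ ℝ)
    letI ips : InnerProductSpace ℝ (Z →₀ ℝ) :=
      { ns with
        inner := c.inner
        norm_sq_eq_re_inner := fun x => by
          have h : ‖x‖ = Real.sqrt (RCLike.re (c.inner x x)) := rfl
          rw [h, Real.sq_sqrt (c.re_inner_nonneg x)]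
        conj_inner_symm := c.conj_inner_symm
        add_left := c.add_left
        smul_left := fun x y r => c.smul_left x y r }
    refine ⟨SeparationQuotient (Z →₀ ℝ), inferInstance, inferInstance,
      fun z => SeparationQuotient.mk (Finsupp.single z 1), ?_⟩
    intro z z'
    have hmk : SeparationQuotient.mk (Finsupp.single z 1)
        - SeparationQuotient.mk (Finsupp.single z' 1)
        = SeparationQuotient.mk (Finsupp.single z (1:ℝ) - Finsupp.single z' 1) := rfl
    rw [hmk, SeparationQuotient.norm_mk, ← real_inner_self_eq_norm_sq]
    show ρ z z' = NegTypeAux.B ρ z₀ (Finsupp.single z 1 - Finsupp.single z' 1)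
      (Finsupp.single z 1 - Finsupp.single z' 1)
    simp only [map_sub, LinearMap.sub_apply, NegTypeAux.B_single]
    simp only [NegTypeAux.Kf, hdiag, hsymm z' z]
    ring
  · rintro ⟨H, hng, hip, φ, hφ⟩ n hn z a ha
    set x : Fin n → H := fun i => φ (z i) with hx
    have expand : ∀ i j, a i * a j * ρ (z i) (z j)
        = (a i * ‖x i‖^2) * a j + a i * (a j * ‖x j‖^2)
          - 2 * (a i * a j * (inner ℝ (x i) (x j) : ℝ)) := by
      intro i j
      rw [hφ (z i) (z j), @norm_sub_sq_real]
      ring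
    have hA : ∀ i : Fin n, ∑ j, (a i * ‖x i‖^2) * a j = 0 := fun i => by
      rw [← Finset.mul_sum, ha, mul_zero]
    have hB : ∑ i, (a i * ∑ j, a j * ‖x j‖^2) = 0 := by
      rw [← Finset.sum_mul, ha, zero_mul]
    have hinner : (inner ℝ (∑ i, a i • x i) (∑ j, a j • x j) : ℝ)
        = ∑ i, ∑ j, a i * a j * (inner ℝ (x i) (x j) : ℝ) := by
      rw [sum_inner]
      refine Finset.sum_congr rfl fun i _ => ?_
      rw [inner_sum]
      refine Finset.sum_congr rfl fun j _ => ?_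
      rw [real_inner_smul_left, real_inner_smul_right]
      ring
    have key : ∑ i, ∑ j, a i * a j * ρ (z i) (z j)
        = -2 * (inner ℝ (∑ i, a i • x i) (∑ j, a j • x j) : ℝ) := by
      rw [hinner]
      calc ∑ i, ∑ j, a i * a j * ρ (z i) (z j)
          = ∑ i, ∑ j, ((a i * ‖x i‖^2) * a j + a i * (a j * ‖x j‖^2)
              - 2 * (a i * a j * (inner ℝ (x i) (x j) : ℝ))) :=
            Finset.sum_congr rfl fun i _ => Finset.sum_congr rfl fun j _ => expand i j
        _ = ∑ i, (∑ j, (a i * ‖x i‖^2) * a j) + ∑ i, (a i * ∑ j, a j * ‖x j‖^2)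
              - ∑ i, ∑ j, 2 * (a i * a j * (inner ℝ (x i) (x j) : ℝ)) := by
            simp only [Finset.sum_add_distrib, Finset.sum_sub_distrib, Finset.mul_sum]
        _ = -2 * ∑ i, ∑ j, a i * a j * (inner ℝ (x i) (x j) : ℝ) := by
            have h2 : ∑ i, ∑ j, 2 * (a i * a j * (inner ℝ (x i) (x j) : ℝ))
                = 2 * ∑ i, ∑ j, a i * a j * (inner ℝ (x i) (x j) : ℝ) := by
              simp only [Finset.mul_sum]
            rw [Finset.sum_congr rfl (fun i _ => hA i), hB, Finset.sum_const_zero]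
            linarith [h2]
    rw [key]
    have := real_inner_self_nonneg (x := ∑ i, a i • x i)
    nlinarith [this]
end

section
/- Let 0 < α ≤ p ≤ 2 and let x₁,…,xₙ : ℕ → ℝ be sequences with ∑_{t} |x_i(t)|^p < ∞ for each i. Then the matrix with entries exp(−‖x_i − x_j‖_p^α), where ‖x − y‖_p = (∑_{t} |x(t) − y(t)|^p)^{1/p}, is positive semidefinite: for all real c₁,…,cₙ, ∑_{i=1}^n ∑_{j=1}^n c_i c_j exp(−‖x_i − x_j‖_p^α) ≥ 0. In other words, the function F(t) = exp(−t^α) is radial positive definite on the space ℓ^p for 0 < α ≤ p ≤ 2. -/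
open Finset Real Set MeasureTheory

/-- Schur product: entrywise product of PSD kernels is PSD. -/
lemma schurK {n : ℕ} (K L : Fin n → Fin n → ℝ) (hKs : ∀ i j, K i j = K j i)
    (hK : ∀ c : Fin n → ℝ, 0 ≤ ∑ i, ∑ j, c i * c j * K i j)
    (hL : ∀ c : Fin n → ℝ, 0 ≤ ∑ i, ∑ j, c i * c j * L i j)
    (c : Fin n → ℝ) : 0 ≤ ∑ i, ∑ j, c i * c j * (K i j * L i j) := by
  have hM : (Matrix.of K).PosSemidef := by
    refine Matrix.posSemidef_iff_dotProduct_mulVec.mpr ⟨?_, ?_⟩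
    · ext i j
      simp [Matrix.conjTranspose, hKs i j]
    · intro v
      have h1 : dotProduct (star v) ((Matrix.of K).mulVec v)
          = ∑ i, ∑ j, v i * v j * K i j := by
        simp only [dotProduct, Matrix.mulVec, Pi.star_apply, star_trivial,
          Matrix.of_apply, Finset.mul_sum]
        exact Finset.sum_congr rfl fun i _ => Finset.sum_congr rfl fun j _ => by ring
      rw [h1]; exact hK v
  obtain ⟨m, B, hB⟩ := Matrix.posSemidef_iff_eq_sum_vecMulVec.mp hM
  have hKB : ∀ i j, K i j = ∑ r, B r i * B r j := by
    intro i j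
    have := congrFun (congrFun hB i) j
    simpa [Matrix.sum_apply, Matrix.vecMulVec_apply] using this
  have key : ∀ i j, c i * c j * (K i j * L i j)
      = ∑ r, (c i * B r i) * (c j * B r j) * L i j := by
    intro i j
    rw [hKB i j, Finset.sum_mul, Finset.mul_sum]
    exact Finset.sum_congr rfl fun r _ => by ring
  calc (0:ℝ) ≤ ∑ r, ∑ i, ∑ j, (c i * B r i) * (c j * B r j) * L i j :=
        Finset.sum_nonneg fun r _ => hL _
    _ = ∑ i, ∑ r, ∑ j, (c i * B r i) * (c j * B r j) * L i j := Finset.sum_comm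
    _ = ∑ i, ∑ j, ∑ r, (c i * B r i) * (c j * B r j) * L i j :=
        Finset.sum_congr rfl fun i _ => Finset.sum_comm
    _ = ∑ i, ∑ j, c i * c j * (K i j * L i j) :=
        Finset.sum_congr rfl fun i _ => Finset.sum_congr rfl fun j _ => (key i j).symm

lemma powK {n : ℕ} (K : Fin n → Fin n → ℝ) (hKs : ∀ i j, K i j = K j i)
    (hK : ∀ c : Fin n → ℝ, 0 ≤ ∑ i, ∑ j, c i * c j * K i j) (m : ℕ)
    (c : Fin n → ℝ) : 0 ≤ ∑ i, ∑ j, c i * c j * K i j ^ m := by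
  induction m generalizing c with
  | zero =>
    simp only [pow_zero, mul_one]
    have : ∑ i, ∑ j, c i * c j = (∑ i, c i) ^ 2 := by
      rw [sq, Finset.sum_mul_sum]
    rw [this]; positivity
  | succ m ih =>
    have h := schurK K (fun i j => K i j ^ m) hKs hK ih c
    simpa [pow_succ, mul_comm] using h
lemma expK {n : ℕ} (K : Fin n → Fin n → ℝ) (hKs : ∀ i j, K i j = K j i)
    (hK : ∀ c : Fin n → ℝ, 0 ≤ ∑ i, ∑ j, c i * c j * K i j)
    (c : Fin n → ℝ) : 0 ≤ ∑ i, ∑ j, c i * c j * Real.exp (K i j) := by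
  have hsum : ∀ i j : Fin n, Summable (fun m : ℕ => c i * c j * (K i j ^ m / m.factorial)) :=
    fun i j => (Real.summable_pow_div_factorial (K i j)).mul_left _
  have hexp : ∀ i j : Fin n, c i * c j * Real.exp (K i j)
      = ∑' m : ℕ, c i * c j * (K i j ^ m / m.factorial) := by
    intro i j
    rw [Real.exp_eq_exp_ℝ, NormedSpace.exp_eq_tsum_div, ← tsum_mul_left]
  calc (0:ℝ) ≤ ∑' m : ℕ, ∑ i, ∑ j, c i * c j * (K i j ^ m / m.factorial) := by
        apply tsum_nonneg
        intro m
        have := powK K hKs hK m c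
        have h2 : ∑ i, ∑ j, c i * c j * (K i j ^ m / m.factorial)
            = (1 / m.factorial : ℝ) * ∑ i, ∑ j, c i * c j * K i j ^ m := by
          rw [Finset.mul_sum]
          refine Finset.sum_congr rfl fun i _ => ?_
          rw [Finset.mul_sum]
          exact Finset.sum_congr rfl fun j _ => by ring
        rw [h2]
        positivity
    _ = ∑ i, ∑ j, ∑' m : ℕ, c i * c j * (K i j ^ m / m.factorial) := by
        rw [Summable.tsum_finsetSum (fun i _ => summable_sum fun j _ => hsum i j)]
        exact Finset.sum_congr rfl fun i _ => Summable.tsum_finsetSum fun j _ => hsum i j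
    _ = ∑ i, ∑ j, c i * c j * Real.exp (K i j) :=
        Finset.sum_congr rfl fun i _ => Finset.sum_congr rfl fun j _ => (hexp i j).symm

/-- Schoenberg: if `a` is symmetric with zero diagonal and conditionally negative
definite, then `exp (-a)` is positive semidefinite. -/
lemma schoenbergK {n : ℕ} (hn : 1 ≤ n) (a : Fin n → Fin n → ℝ)
    (has : ∀ i j, a i j = a j i) (had : ∀ i, a i i = 0)
    (hneg : ∀ c : Fin n → ℝ, ∑ i, c i = 0 → ∑ i, ∑ j, c i * c j * a i j ≤ 0)
    (c : Fin n → ℝ) : 0 ≤ ∑ i, ∑ j, c i * c j * Real.exp (-a i j) := by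
  have hpos : 0 < n := hn
  set k : Fin n := ⟨0, hpos⟩ with hk
  set b : Fin n → Fin n → ℝ := fun i j => a i k + a j k - a i j with hbdef
  have hbs : ∀ i j, b i j = b j i := by
    intro i j; simp only [hbdef]; rw [has i j]; ring
  have hbpos : ∀ c : Fin n → ℝ, 0 ≤ ∑ i, ∑ j, c i * c j * b i j := by
    intro c
    set S : ℝ := ∑ i, c i with hS
    set d : Fin n → ℝ := fun i => c i - S * (if i = k then 1 else 0) with hd
    have hdsum : ∑ i, d i = 0 := by
      simp only [hd, Finset.sum_sub_distrib, ← Finset.mul_sum]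
      simp [hS]
    have h1 := hneg d hdsum
    set A : ℝ := ∑ i, c i * a i k with hA
    have T2 : ∑ i, ∑ j, c i * (if j = k then 1 else 0) * a i j = A := by
      refine Finset.sum_congr rfl fun i _ => ?_
      simp [mul_ite, ite_mul, Finset.sum_ite_eq']
    have T3 : ∑ i, ∑ j, (if i = k then 1 else 0) * c j * a i j = A := by
      have : ∀ i : Fin n, ∑ j, (if i = k then 1 else 0) * c j * a i j
          = if i = k then ∑ j, c j * a i j else 0 := by
        intro i
        split <;> simp
      rw [Finset.sum_congr rfl fun i _ => this i]
      rw [Finset.sum_ite_eq' Finset.univ k (fun i => ∑ j, c j * a i j)]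
      simp only [Finset.mem_univ, if_true, hA]
      exact Finset.sum_congr rfl fun j _ => by rw [has k j]
    have T4 : ∑ i, ∑ j, (if i = k then 1 else 0) * (if j = k then 1 else 0) * a i j
        = 0 := by
      have : ∀ i : Fin n, ∑ j, (if i = k then 1 else 0) * (if j = k then 1 else 0) * a i j
          = if i = k then a i k else 0 := by
        intro i
        split <;> simp [mul_ite, ite_mul, Finset.sum_ite_eq']
      rw [Finset.sum_congr rfl fun i _ => this i, Finset.sum_ite_eq' Finset.univ k]
      simp [had]
    have hexp : ∑ i, ∑ j, d i * d j * a i j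
        = ∑ i, ∑ j, c i * c j * a i j - 2 * S * A := by
      have point : ∀ i j, d i * d j * a i j
          = c i * c j * a i j - S * (c i * (if j = k then 1 else 0) * a i j)
            - S * ((if i = k then 1 else 0) * c j * a i j)
            + S * S * ((if i = k then 1 else 0) * (if j = k then 1 else 0) * a i j) := by
        intro i j; simp only [hd]; ring
      calc ∑ i, ∑ j, d i * d j * a i j
          = ∑ i, ∑ j, (c i * c j * a i j - S * (c i * (if j = k then 1 else 0) * a i j)
            - S * ((if i = k then 1 else 0) * c j * a i j)
            + S * S * ((if i = k then 1 else 0) * (if j = k then 1 else 0) * a i j)) :=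
            Finset.sum_congr rfl fun i _ => Finset.sum_congr rfl fun j _ => point i j
        _ = ∑ i, ∑ j, c i * c j * a i j - 2 * S * A := by
            simp only [Finset.sum_add_distrib, Finset.sum_sub_distrib, ← Finset.mul_sum]
            rw [T2, T3, T4]
            ring
    have hccb : ∑ i, ∑ j, c i * c j * b i j
        = 2 * S * A - ∑ i, ∑ j, c i * c j * a i j := by
      have point : ∀ i j : Fin n, c i * c j * b i j
          = c i * (a i k) * c j + c i * (c j * a j k) - c i * c j * a i j := by
        intro i j; simp only [hbdef]; ring
      calc ∑ i, ∑ j, c i * c j * b i j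
          = ∑ i, ∑ j, (c i * (a i k) * c j + c i * (c j * a j k) - c i * c j * a i j) :=
            Finset.sum_congr rfl fun i _ => Finset.sum_congr rfl fun j _ => point i j
        _ = 2 * S * A - ∑ i, ∑ j, c i * c j * a i j := by
            simp only [Finset.sum_add_distrib, Finset.sum_sub_distrib, ← Finset.mul_sum,
              ← Finset.sum_mul]
            have e1 : ∑ i, c i * a i k * S = S * A := by
              rw [← Finset.sum_mul, hA]; ring_nf
            have e2 : ∑ i, c i * ∑ j, c j * a j k = S * A := by
              rw [← Finset.sum_mul, ← hS]
            rw [← hS, ← hA]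
            ring
    rw [hccb]
    rw [hexp] at h1
    linarith
  -- now factor exp(-a i j) = exp(-a i k) * exp(-a j k) * exp(b i j)
  have factor : ∀ i j, c i * c j * Real.exp (-a i j)
      = (c i * Real.exp (-a i k)) * (c j * Real.exp (-a j k)) * Real.exp (b i j) := by
    intro i j
    rw [show -a i j = -a i k + -a j k + b i j by simp only [hbdef]; ring,
      Real.exp_add, Real.exp_add]
    ring
  calc (0:ℝ) ≤ ∑ i, ∑ j, (fun i => c i * Real.exp (-a i k)) i
        * (fun i => c i * Real.exp (-a i k)) j * Real.exp (b i j) :=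
        expK b hbs hbpos _
    _ = ∑ i, ∑ j, c i * c j * Real.exp (-a i j) :=
        Finset.sum_congr rfl fun i _ => Finset.sum_congr rfl fun j _ => (factor i j).symm

lemma integrableOn_kernel (γ : ℝ) (hγ0 : 0 < γ) (g : ℝ → ℝ) (hc : Continuous g)
    (D q : ℝ) (hq : γ < q) (hb0 : ∀ s ∈ Set.Ioc (0:ℝ) 1, |g s| ≤ D * s ^ q)
    (E : ℝ) (hb1 : ∀ s ∈ Set.Ioi (1:ℝ), |g s| ≤ E) :
    IntegrableOn (fun s => g s * s ^ (-1 - γ)) (Set.Ioi (0:ℝ)) := by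
  have hmeas : ∀ (t : Set ℝ), t ⊆ Set.Ioi (0:ℝ) → MeasurableSet t →
      AEStronglyMeasurable (fun s => g s * s ^ (-1 - γ)) (volume.restrict t) := by
    intro t ht hmt
    have hcont : ContinuousOn (fun s : ℝ => g s * s ^ (-1 - γ)) t := by
      apply ContinuousOn.mul (hc.continuousOn)
      apply ContinuousOn.rpow_const continuousOn_id
      intro s hs
      exact Or.inl (ne_of_gt (ht hs))
    exact hcont.aestronglyMeasurable hmt
  have h1 : IntegrableOn (fun s => g s * s ^ (-1 - γ)) (Set.Ioc (0:ℝ) 1) := by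
    have hi : IntegrableOn (fun s : ℝ => D * s ^ (q - 1 - γ)) (Set.Ioc (0:ℝ) 1) := by
      have := (intervalIntegral.intervalIntegrable_rpow' (a := 0) (b := 1)
        (r := q - 1 - γ) (by linarith)).1
      exact this.const_mul D
    apply Integrable.mono hi (hmeas _ Set.Ioc_subset_Ioi_self measurableSet_Ioc)
    rw [ae_restrict_iff' measurableSet_Ioc]
    filter_upwards with s hs
    have hs0 : 0 < s := hs.1
    have hrp : (0:ℝ) ≤ s ^ (-1 - γ) := Real.rpow_nonneg hs0.le _
    rw [Real.norm_eq_abs, Real.norm_eq_abs, abs_mul, abs_of_nonneg hrp]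
    have : |g s| * s ^ (-1 - γ) ≤ (D * s ^ q) * s ^ (-1 - γ) :=
      mul_le_mul_of_nonneg_right (hb0 s hs) hrp
    calc |g s| * s ^ (-1 - γ) ≤ D * s ^ q * s ^ (-1 - γ) := this
      _ = D * s ^ (q - 1 - γ) := by
          rw [mul_assoc, ← Real.rpow_add hs0]; ring_nf
      _ ≤ |D * s ^ (q - 1 - γ)| := le_abs_self _
  have h2 : IntegrableOn (fun s => g s * s ^ (-1 - γ)) (Set.Ioi (1:ℝ)) := by
    have hi : IntegrableOn (fun s : ℝ => E * s ^ (-1 - γ)) (Set.Ioi (1:ℝ)) :=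
      (integrableOn_Ioi_rpow_of_lt (by linarith) (by norm_num)).const_mul E
    apply Integrable.mono hi (hmeas (Set.Ioi (1:ℝ)) (fun s hs => Set.mem_Ioi.mpr (lt_trans one_pos (Set.mem_Ioi.mp hs))) measurableSet_Ioi)
    rw [ae_restrict_iff' measurableSet_Ioi]
    filter_upwards with s hs
    have hs0 : (0:ℝ) < s := lt_trans one_pos hs
    have hrp : (0:ℝ) ≤ s ^ (-1 - γ) := Real.rpow_nonneg hs0.le _
    rw [Real.norm_eq_abs, Real.norm_eq_abs, abs_mul, abs_of_nonneg hrp]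
    calc |g s| * s ^ (-1 - γ) ≤ E * s ^ (-1 - γ) :=
          mul_le_mul_of_nonneg_right (hb1 s hs) hrp
      _ ≤ |E * s ^ (-1 - γ)| := le_abs_self _
  have := h1.union h2
  rwa [Set.Ioc_union_Ioi_eq_Ioi (by norm_num : (0:ℝ) ≤ 1)] at this

lemma scale_integral (γ : ℝ) (g : ℝ → ℝ) (u : ℝ) (hu : 0 < u) :
    ∫ s in Set.Ioi (0:ℝ), g (u * s) * s ^ (-1 - γ)
      = u ^ γ * ∫ s in Set.Ioi (0:ℝ), g s * s ^ (-1 - γ) := by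
  have key := MeasureTheory.integral_comp_mul_left_Ioi
    (fun t => g t * t ^ (-1 - γ)) 0 hu
  simp only [mul_zero, smul_eq_mul] at key
  have congr1 : ∫ s in Set.Ioi (0:ℝ), g (u * s) * s ^ (-1 - γ)
      = ∫ s in Set.Ioi (0:ℝ), u ^ (1 + γ) * (g (u * s) * (u * s) ^ (-1 - γ)) := by
    apply setIntegral_congr_fun measurableSet_Ioi
    intro s hs
    have hs0 : (0:ℝ) < s := hs
    show g (u * s) * s ^ (-1 - γ) = u ^ (1 + γ) * (g (u * s) * (u * s) ^ (-1 - γ))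
    rw [Real.mul_rpow hu.le hs0.le]
    rw [show (1:ℝ) + γ = -(-1-γ) by ring, Real.rpow_neg hu.le]
    field_simp
  rw [congr1, MeasureTheory.integral_const_mul, key]
  rw [← mul_assoc, ← Real.rpow_neg_one u, ← Real.rpow_add hu]
  ring_nf

lemma integral_pos_aux (f : ℝ → ℝ) (hf : IntegrableOn f (Set.Ioi (0:ℝ)))
    (h0 : ∀ s ∈ Set.Ioi (0:ℝ), 0 ≤ f s) (a b m : ℝ) (ha : 0 < a) (hab : a < b)
    (hm : 0 < m) (hbd : ∀ s ∈ Set.Icc a b, m ≤ f s) :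
    0 < ∫ s in Set.Ioi (0:ℝ), f s := by
  have hsub : Set.Icc a b ⊆ Set.Ioi (0:ℝ) := fun s hs => lt_of_lt_of_le ha hs.1
  have hIcc : IntegrableOn f (Set.Icc a b) := hf.mono_set hsub
  have step1 : ∫ s in Set.Icc a b, f s ≤ ∫ s in Set.Ioi (0:ℝ), f s := by
    apply setIntegral_mono_set hf
    · filter_upwards [ae_restrict_mem measurableSet_Ioi] with s hs using h0 s hs
    · exact HasSubset.Subset.eventuallyLE hsub
  have step2 : m * (b - a) ≤ ∫ s in Set.Icc a b, f s := by
    have hconst : ∫ _ in Set.Icc a b, m = m * (b - a) := by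
      simp [Real.volume_Icc, ENNReal.toReal_ofReal (by linarith : (0:ℝ) ≤ b - a)]
      rw [max_eq_left (by linarith)]; ring
    rw [← hconst]
    apply setIntegral_mono_on (integrableOn_const (by simp [Real.volume_Icc])) hIcc measurableSet_Icc
    exact hbd
  have : 0 < m * (b - a) := mul_pos hm (by linarith)
  linarith

section cosrep
variable (r : ℝ)

lemma cos_integrable (hr0 : 0 < r) (hr2 : r < 2) (u : ℝ) :
    IntegrableOn (fun s => (1 - Real.cos (u * s)) * s ^ (-1 - r)) (Set.Ioi (0:ℝ)) := by
  refine integrableOn_kernel r hr0 _ (by continuity) (u ^ 2 / 2) 2 hr2 ?_ 2 ?_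
  · intro s hs
    rw [abs_of_nonneg (by linarith [Real.cos_le_one (u * s)])]
    have h1 : 1 - (u * s) ^ 2 / 2 ≤ Real.cos (u * s) := Real.one_sub_sq_div_two_le_cos
    have h2 : s ^ (2:ℝ) = s ^ (2:ℕ) := by
      rw [show (2:ℝ) = ((2:ℕ):ℝ) from by norm_num, Real.rpow_natCast]
    rw [h2]
    nlinarith [sq_nonneg u, sq_nonneg s]
  · intro s hs
    rw [abs_of_nonneg (by linarith [Real.cos_le_one (u * s)])]
    linarith [Real.neg_one_le_cos (u * s)]

lemma cos_repr (hr0 : 0 < r) (hr2 : r < 2) (u : ℝ) :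
    ∫ s in Set.Ioi (0:ℝ), (1 - Real.cos (u * s)) * s ^ (-1 - r)
      = |u| ^ r * ∫ s in Set.Ioi (0:ℝ), (1 - Real.cos s) * s ^ (-1 - r) := by
  rcases eq_or_ne u 0 with hu | hu
  · simp [hu, Real.zero_rpow hr0.ne']
  · have habs : ∀ s ∈ Set.Ioi (0:ℝ), (1 - Real.cos (u * s)) * s ^ (-1 - r)
        = (1 - Real.cos (|u| * s)) * s ^ (-1 - r) := by
      intro s hs
      rw [show |u| * s = |u * s| from by
        rw [abs_mul, abs_of_pos (show (0:ℝ) < s from hs)], Real.cos_abs]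
    rw [setIntegral_congr_fun measurableSet_Ioi habs]
    exact scale_integral r (fun t => 1 - Real.cos t) |u| (abs_pos.mpr hu)

lemma cos_const_pos (hr0 : 0 < r) (hr2 : r < 2) :
    0 < ∫ s in Set.Ioi (0:ℝ), (1 - Real.cos s) * s ^ (-1 - r) := by
  have hint : IntegrableOn (fun s => (1 - Real.cos s) * s ^ (-1 - r)) (Set.Ioi (0:ℝ)) := by
    have := cos_integrable r hr0 hr2 1
    simpa using this
  apply integral_pos_aux _ hint _ (Real.pi / 2) Real.pi (Real.pi ^ (-1 - r))
    (by positivity) (by linarith [Real.pi_pos]) (by positivity)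
  · intro s hs
    have h1 : Real.cos s ≤ 0 :=
      Real.cos_nonpos_of_pi_div_two_le_of_le hs.1 (by linarith [hs.2, Real.pi_pos])
    have h2 : Real.pi ^ (-1 - r) ≤ s ^ (-1 - r) := by
      apply Real.rpow_le_rpow_of_nonpos (by linarith [Real.pi_pos, hs.1, Real.pi_div_two_pos]) hs.2 (by linarith)
    calc Real.pi ^ (-1 - r) ≤ s ^ (-1 - r) := h2
      _ ≤ (1 - Real.cos s) * s ^ (-1 - r) := by
        nlinarith [Real.rpow_nonneg (show (0:ℝ) ≤ s from by linarith [hs.1, Real.pi_div_two_pos]) (-1-r)]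
  · intro s hs
    have hs0 : (0:ℝ) < s := hs
    have : 0 ≤ 1 - Real.cos s := by linarith [Real.cos_le_one s]
    positivity

end cosrep

section exprep
variable (γ : ℝ)

lemma exp_integrable (hγ0 : 0 < γ) (hγ1 : γ < 1) (u : ℝ) (hu : 0 ≤ u) :
    IntegrableOn (fun s => (1 - Real.exp (-(u * s))) * s ^ (-1 - γ)) (Set.Ioi (0:ℝ)) := by
  refine integrableOn_kernel γ hγ0 _ (by continuity) u 1 hγ1 ?_ 1 ?_
  · intro s hs
    have hus : 0 ≤ u * s := mul_nonneg hu hs.1.le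
    have hle : Real.exp (-(u * s)) ≤ 1 := Real.exp_le_one_iff.mpr (by linarith)
    rw [abs_of_nonneg (by linarith)]
    have h1 : -(u * s) + 1 ≤ Real.exp (-(u * s)) := Real.add_one_le_exp _
    rw [Real.rpow_one]
    linarith
  · intro s hs
    have hus : 0 ≤ u * s := mul_nonneg hu (by linarith [show (1:ℝ) < s from hs])
    have hle : Real.exp (-(u * s)) ≤ 1 := Real.exp_le_one_iff.mpr (by linarith)
    rw [abs_of_nonneg (by linarith)]
    linarith [Real.exp_pos (-(u * s))]

lemma exp_repr (hγ0 : 0 < γ) (u : ℝ) (hu : 0 ≤ u) :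
    ∫ s in Set.Ioi (0:ℝ), (1 - Real.exp (-(u * s))) * s ^ (-1 - γ)
      = u ^ γ * ∫ s in Set.Ioi (0:ℝ), (1 - Real.exp (-s)) * s ^ (-1 - γ) := by
  rcases eq_or_lt_of_le hu with hu0 | hu0
  · simp [← hu0, Real.zero_rpow hγ0.ne']
  · exact scale_integral γ (fun t => 1 - Real.exp (-t)) u hu0

lemma exp_const_pos (hγ0 : 0 < γ) (hγ1 : γ < 1) :
    0 < ∫ s in Set.Ioi (0:ℝ), (1 - Real.exp (-s)) * s ^ (-1 - γ) := by
  have hint : IntegrableOn (fun s => (1 - Real.exp (-s)) * s ^ (-1 - γ)) (Set.Ioi (0:ℝ)) := by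
    have := exp_integrable γ hγ0 hγ1 1 zero_le_one
    simpa using this
  apply integral_pos_aux _ hint _ 1 2 ((1 - Real.exp (-1)) * 2 ^ (-1 - γ))
    one_pos one_lt_two
  · have : Real.exp (-1) < 1 := Real.exp_lt_one_iff.mpr (by norm_num)
    have h2 : (0:ℝ) < (2:ℝ) ^ (-1 - γ) := Real.rpow_pos_of_pos two_pos _
    nlinarith
  · intro s hs
    have hs0 : (0:ℝ) < s := lt_of_lt_of_le one_pos hs.1
    have h1 : Real.exp (-s) ≤ Real.exp (-1) := Real.exp_le_exp.mpr (by linarith [hs.1])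
    have h2 : (2:ℝ) ^ (-1 - γ) ≤ s ^ (-1 - γ) :=
      Real.rpow_le_rpow_of_nonpos hs0 hs.2 (by linarith)
    have h3 : 0 < 1 - Real.exp (-1) := by
      have : Real.exp (-1) < 1 := Real.exp_lt_one_iff.mpr (by norm_num)
      linarith
    have h4 : (0:ℝ) ≤ s ^ (-1 - γ) := Real.rpow_nonneg hs0.le _
    nlinarith
  · intro s hs
    have hs0 : (0:ℝ) < s := hs
    have : Real.exp (-s) ≤ 1 := Real.exp_le_one_iff.mpr (by linarith)
    have h4 : (0:ℝ) ≤ s ^ (-1 - γ) := Real.rpow_nonneg hs0.le _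
    nlinarith

end exprep

lemma dsum_mul {n : ℕ} (f g : Fin n → ℝ) :
    ∑ i, ∑ j, f i * g j = (∑ i, f i) * (∑ j, g j) := by
  rw [Finset.sum_mul_sum]

/-- `|u| ^ r` is conditionally negative definite on `ℝ` for `0 < r ≤ 2`. -/
lemma nd_real (r : ℝ) (hr0 : 0 < r) (hr2 : r ≤ 2) {n : ℕ} (u : Fin n → ℝ)
    (c : Fin n → ℝ) (hc : ∑ i, c i = 0) :
    ∑ i, ∑ j, c i * c j * |u i - u j| ^ r ≤ 0 := by
  rcases eq_or_lt_of_le hr2 with hr2e | hr2l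
  · -- r = 2
    subst hr2e
    have point : ∀ i j, c i * c j * |u i - u j| ^ (2:ℝ)
        = (c i * u i ^ 2) * c j - 2 * ((c i * u i) * (c j * u j)) + c i * (c j * u j ^ 2) := by
      intro i j
      rw [show ((2:ℝ)) = ((2:ℕ):ℝ) from by norm_num, Real.rpow_natCast, sq_abs]
      ring
    have h1 : ∑ i, ∑ j, (c i * u i ^ 2) * c j = (∑ i, c i * u i ^ 2) * (∑ j, c j) :=
      dsum_mul _ _
    have h2 : ∑ i, ∑ j, (c i * u i) * (c j * u j) = (∑ i, c i * u i) * (∑ j, c j * u j) :=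
      dsum_mul _ _
    have h3 : ∑ i, ∑ j, c i * (c j * u j ^ 2) = (∑ i, c i) * (∑ j, c j * u j ^ 2) :=
      dsum_mul _ _
    calc ∑ i, ∑ j, c i * c j * |u i - u j| ^ (2:ℝ)
        = ∑ i, ∑ j, ((c i * u i ^ 2) * c j - 2 * ((c i * u i) * (c j * u j))
            + c i * (c j * u j ^ 2)) :=
          Finset.sum_congr rfl fun i _ => Finset.sum_congr rfl fun j _ => point i j
      _ = (∑ i, ∑ j, (c i * u i ^ 2) * c j) - 2 * (∑ i, ∑ j, (c i * u i) * (c j * u j))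
            + (∑ i, ∑ j, c i * (c j * u j ^ 2)) := by
          simp only [Finset.sum_add_distrib, Finset.sum_sub_distrib, ← Finset.mul_sum]
      _ ≤ 0 := by
          rw [h1, h2, h3, hc]
          nlinarith [sq_nonneg (∑ i, c i * u i)]
  · -- r < 2
    set C : ℝ := ∫ s in Set.Ioi (0:ℝ), (1 - Real.cos s) * s ^ (-1 - r) with hCdef
    have hC : 0 < C := cos_const_pos r hr0 hr2l
    have hint : ∀ i j : Fin n, Integrable (fun s =>
        c i * c j * ((1 - Real.cos ((u i - u j) * s)) * s ^ (-1 - r)))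
        (volume.restrict (Set.Ioi (0:ℝ))) :=
      fun i j => (cos_integrable r hr0 hr2l (u i - u j)).const_mul _
    have hij : ∀ i j : Fin n, (c i * c j * |u i - u j| ^ r) * C
        = ∫ s in Set.Ioi (0:ℝ),
            c i * c j * ((1 - Real.cos ((u i - u j) * s)) * s ^ (-1 - r)) := by
      intro i j
      rw [MeasureTheory.integral_const_mul, cos_repr r hr0 hr2l]
      ring
    have key : (∑ i, ∑ j, c i * c j * |u i - u j| ^ r) * C
        = ∫ s in Set.Ioi (0:ℝ), ∑ i, ∑ j,
            c i * c j * ((1 - Real.cos ((u i - u j) * s)) * s ^ (-1 - r)) := by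
      calc (∑ i, ∑ j, c i * c j * |u i - u j| ^ r) * C
          = ∑ i, (∑ j, c i * c j * |u i - u j| ^ r) * C := Finset.sum_mul _ _ _
        _ = ∑ i, ∑ j, (c i * c j * |u i - u j| ^ r) * C :=
            Finset.sum_congr rfl fun i _ => Finset.sum_mul _ _ _
        _ = ∑ i, ∑ j, ∫ s in Set.Ioi (0:ℝ),
              c i * c j * ((1 - Real.cos ((u i - u j) * s)) * s ^ (-1 - r)) :=
            Finset.sum_congr rfl fun i _ => Finset.sum_congr rfl fun j _ => hij i j
        _ = ∑ i, ∫ s in Set.Ioi (0:ℝ), ∑ j,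
              c i * c j * ((1 - Real.cos ((u i - u j) * s)) * s ^ (-1 - r)) :=
            Finset.sum_congr rfl fun i _ =>
              (MeasureTheory.integral_finset_sum _ fun j _ => hint i j).symm
        _ = ∫ s in Set.Ioi (0:ℝ), ∑ i, ∑ j,
              c i * c j * ((1 - Real.cos ((u i - u j) * s)) * s ^ (-1 - r)) :=
            (MeasureTheory.integral_finset_sum _ fun i _ =>
              integrable_finset_sum _ fun j _ => hint i j).symm
    have hnonpos : ∫ s in Set.Ioi (0:ℝ), ∑ i, ∑ j,
        c i * c j * ((1 - Real.cos ((u i - u j) * s)) * s ^ (-1 - r)) ≤ 0 := by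
      apply setIntegral_nonpos measurableSet_Ioi
      intro s hs
      have hs0 : (0:ℝ) < s := hs
      have hsp : (0:ℝ) ≤ s ^ (-1 - r) := Real.rpow_nonneg hs0.le _
      have point : ∀ i j, c i * c j * ((1 - Real.cos ((u i - u j) * s)) * s ^ (-1 - r))
          = s ^ (-1 - r) * (c i * c j)
            - (s ^ (-1 - r) * ((c i * Real.cos (u i * s)) * (c j * Real.cos (u j * s)))
              + s ^ (-1 - r) * ((c i * Real.sin (u i * s)) * (c j * Real.sin (u j * s)))) := by
        intro i j
        rw [show (u i - u j) * s = u i * s - u j * s from sub_mul _ _ _, Real.cos_sub]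
        ring
      calc ∑ i, ∑ j, c i * c j * ((1 - Real.cos ((u i - u j) * s)) * s ^ (-1 - r))
          = ∑ i, ∑ j, (s ^ (-1 - r) * (c i * c j)
            - (s ^ (-1 - r) * ((c i * Real.cos (u i * s)) * (c j * Real.cos (u j * s)))
              + s ^ (-1 - r) * ((c i * Real.sin (u i * s)) * (c j * Real.sin (u j * s))))) :=
            Finset.sum_congr rfl fun i _ => Finset.sum_congr rfl fun j _ => point i j
        _ = s ^ (-1 - r) * (∑ i, ∑ j, c i * c j)
            - (s ^ (-1 - r) * (∑ i, ∑ j, (c i * Real.cos (u i * s)) * (c j * Real.cos (u j * s)))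
              + s ^ (-1 - r) * (∑ i, ∑ j, (c i * Real.sin (u i * s)) * (c j * Real.sin (u j * s)))) := by
            simp only [Finset.sum_add_distrib, Finset.sum_sub_distrib, ← Finset.mul_sum]
        _ ≤ 0 := by
            rw [dsum_mul c c, dsum_mul (fun i => c i * Real.cos (u i * s)) _,
              dsum_mul (fun i => c i * Real.sin (u i * s)) _, hc]
            have := sq_nonneg (∑ i, c i * Real.cos (u i * s))
            have := sq_nonneg (∑ i, c i * Real.sin (u i * s))
            nlinarith [mul_nonneg hsp (sq_nonneg (∑ i, c i * Real.cos (u i * s))),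
              mul_nonneg hsp (sq_nonneg (∑ i, c i * Real.sin (u i * s)))]
    have hfin : (∑ i, ∑ j, c i * c j * |u i - u j| ^ r) * C ≤ 0 := key ▸ hnonpos
    nlinarith [hfin, hC]

lemma abs_sub_rpow_le (p : ℝ) (hp : 0 < p) (a b : ℝ) :
    |a - b| ^ p ≤ 2 ^ p * (|a| ^ p + |b| ^ p) := by
  have h1 : |a - b| ≤ 2 * max |a| |b| := by
    calc |a - b| ≤ |a| + |b| := abs_sub a b
      _ ≤ 2 * max |a| |b| := by
        rcases le_total |a| |b| with h | h
        · rw [max_eq_right h]; linarith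
        · rw [max_eq_left h]; linarith
  calc |a - b| ^ p ≤ (2 * max |a| |b|) ^ p :=
        Real.rpow_le_rpow (abs_nonneg _) h1 hp.le
    _ = 2 ^ p * (max |a| |b|) ^ p := by
        rw [Real.mul_rpow (by norm_num) (le_max_iff.mpr (Or.inl (abs_nonneg _)))]
    _ ≤ 2 ^ p * (|a| ^ p + |b| ^ p) := by
        have h2 : (max |a| |b|) ^ p ≤ |a| ^ p + |b| ^ p := by
          rcases max_cases |a| |b| with ⟨he, _⟩ | ⟨he, _⟩ <;> rw [he]
          · nlinarith [Real.rpow_nonneg (abs_nonneg b) p]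
          · nlinarith [Real.rpow_nonneg (abs_nonneg a) p]
        nlinarith [Real.rpow_pos_of_pos (show (0:ℝ) < 2 by norm_num) p]

lemma summable_sub_rpow (p : ℝ) (hp : 0 < p) {n : ℕ} (x : Fin n → ℕ → ℝ)
    (hx : ∀ i, Summable (fun t => |x i t| ^ p)) (i j : Fin n) :
    Summable (fun t => |x i t - x j t| ^ p) := by
  apply Summable.of_nonneg_of_le (fun t => Real.rpow_nonneg (abs_nonneg _) _)
    (fun t => abs_sub_rpow_le p hp (x i t) (x j t))
  exact ((hx i).add (hx j)).mul_left _

/-- conditional negative definiteness of the `p`-th power of `ℓ^p` distance -/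
lemma nd_lp (p : ℝ) (hp0 : 0 < p) (hp2 : p ≤ 2) {n : ℕ} (x : Fin n → ℕ → ℝ)
    (hx : ∀ i, Summable (fun t => |x i t| ^ p)) (c : Fin n → ℝ) (hc : ∑ i, c i = 0) :
    ∑ i, ∑ j, c i * c j * (∑' t, |x i t - x j t| ^ p) ≤ 0 := by
  have hsum : ∀ i j : Fin n, Summable (fun t => c i * c j * |x i t - x j t| ^ p) :=
    fun i j => (summable_sub_rpow p hp0 x hx i j).mul_left _
  calc ∑ i, ∑ j, c i * c j * (∑' t, |x i t - x j t| ^ p)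
      = ∑ i, ∑ j, ∑' t, c i * c j * |x i t - x j t| ^ p :=
        Finset.sum_congr rfl fun i _ => Finset.sum_congr rfl fun j _ =>
          (tsum_mul_left).symm
    _ = ∑ i, ∑' t, ∑ j, c i * c j * |x i t - x j t| ^ p :=
        Finset.sum_congr rfl fun i _ => (Summable.tsum_finsetSum fun j _ => hsum i j).symm
    _ = ∑' t, ∑ i, ∑ j, c i * c j * |x i t - x j t| ^ p :=
        (Summable.tsum_finsetSum fun i _ => summable_sum fun j _ => hsum i j).symm
    _ ≤ 0 := by
        apply tsum_nonpos
        intro t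
        exact nd_real p hp0 hp2 (fun i => x i t) c hc

/-- stability of conditional negative definiteness under powers `0 < γ ≤ 1` -/
lemma nd_power {n : ℕ} (hn : 1 ≤ n) (γ : ℝ) (hγ0 : 0 < γ) (hγ1 : γ ≤ 1)
    (q : Fin n → Fin n → ℝ) (hq0 : ∀ i j, 0 ≤ q i j) (hqs : ∀ i j, q i j = q j i)
    (hqd : ∀ i, q i i = 0)
    (hnd : ∀ c : Fin n → ℝ, ∑ i, c i = 0 → ∑ i, ∑ j, c i * c j * q i j ≤ 0)
    (c : Fin n → ℝ) (hc : ∑ i, c i = 0) :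
    ∑ i, ∑ j, c i * c j * q i j ^ γ ≤ 0 := by
  rcases eq_or_lt_of_le hγ1 with hγe | hγl
  · simp only [hγe, Real.rpow_one]
    exact hnd c hc
  · set J : ℝ := ∫ s in Set.Ioi (0:ℝ), (1 - Real.exp (-s)) * s ^ (-1 - γ) with hJdef
    have hJ : 0 < J := exp_const_pos γ hγ0 hγl
    have hint : ∀ i j : Fin n, Integrable (fun s =>
        c i * c j * ((1 - Real.exp (-(q i j * s))) * s ^ (-1 - γ)))
        (volume.restrict (Set.Ioi (0:ℝ))) :=
      fun i j => (exp_integrable γ hγ0 hγl (q i j) (hq0 i j)).const_mul _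
    have hij : ∀ i j : Fin n, (c i * c j * q i j ^ γ) * J
        = ∫ s in Set.Ioi (0:ℝ),
            c i * c j * ((1 - Real.exp (-(q i j * s))) * s ^ (-1 - γ)) := by
      intro i j
      rw [MeasureTheory.integral_const_mul, exp_repr γ hγ0 (q i j) (hq0 i j)]
      ring
    have key : (∑ i, ∑ j, c i * c j * q i j ^ γ) * J
        = ∫ s in Set.Ioi (0:ℝ), ∑ i, ∑ j,
            c i * c j * ((1 - Real.exp (-(q i j * s))) * s ^ (-1 - γ)) := by
      calc (∑ i, ∑ j, c i * c j * q i j ^ γ) * J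
          = ∑ i, (∑ j, c i * c j * q i j ^ γ) * J := Finset.sum_mul _ _ _
        _ = ∑ i, ∑ j, (c i * c j * q i j ^ γ) * J :=
            Finset.sum_congr rfl fun i _ => Finset.sum_mul _ _ _
        _ = ∑ i, ∑ j, ∫ s in Set.Ioi (0:ℝ),
              c i * c j * ((1 - Real.exp (-(q i j * s))) * s ^ (-1 - γ)) :=
            Finset.sum_congr rfl fun i _ => Finset.sum_congr rfl fun j _ => hij i j
        _ = ∑ i, ∫ s in Set.Ioi (0:ℝ), ∑ j,
              c i * c j * ((1 - Real.exp (-(q i j * s))) * s ^ (-1 - γ)) :=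
            Finset.sum_congr rfl fun i _ =>
              (MeasureTheory.integral_finset_sum _ fun j _ => hint i j).symm
        _ = ∫ s in Set.Ioi (0:ℝ), ∑ i, ∑ j,
              c i * c j * ((1 - Real.exp (-(q i j * s))) * s ^ (-1 - γ)) :=
            (MeasureTheory.integral_finset_sum _ fun i _ =>
              integrable_finset_sum _ fun j _ => hint i j).symm
    have hnonpos : ∫ s in Set.Ioi (0:ℝ), ∑ i, ∑ j,
        c i * c j * ((1 - Real.exp (-(q i j * s))) * s ^ (-1 - γ)) ≤ 0 := by
      apply setIntegral_nonpos measurableSet_Ioi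
      intro s hs
      have hs0 : (0:ℝ) < s := hs
      have hsp : (0:ℝ) ≤ s ^ (-1 - γ) := Real.rpow_nonneg hs0.le _
      have hexp : 0 ≤ ∑ i, ∑ j, c i * c j * Real.exp (-(q i j * s)) := by
        apply schoenbergK hn (fun i j => q i j * s)
          (fun i j => by show q i j * s = q j i * s; rw [hqs i j])
          (fun i => by show q i i * s = 0; rw [hqd i]; ring)
        intro c' hc'
        have h1 : ∑ i, ∑ j, c' i * c' j * (q i j * s)
            = (∑ i, ∑ j, c' i * c' j * q i j) * s := by
          rw [Finset.sum_mul]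
          refine Finset.sum_congr rfl fun i _ => ?_
          rw [Finset.sum_mul]
          exact Finset.sum_congr rfl fun j _ => by ring
        rw [h1]
        exact mul_nonpos_of_nonpos_of_nonneg (hnd c' hc') hs0.le
      have point : ∀ i j, c i * c j * ((1 - Real.exp (-(q i j * s))) * s ^ (-1 - γ))
          = s ^ (-1 - γ) * (c i * c j)
            - s ^ (-1 - γ) * (c i * c j * Real.exp (-(q i j * s))) := by
        intro i j; ring
      calc ∑ i, ∑ j, c i * c j * ((1 - Real.exp (-(q i j * s))) * s ^ (-1 - γ))
          = ∑ i, ∑ j, (s ^ (-1 - γ) * (c i * c j)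
            - s ^ (-1 - γ) * (c i * c j * Real.exp (-(q i j * s)))) :=
            Finset.sum_congr rfl fun i _ => Finset.sum_congr rfl fun j _ => point i j
        _ = s ^ (-1 - γ) * (∑ i, ∑ j, c i * c j)
            - s ^ (-1 - γ) * (∑ i, ∑ j, c i * c j * Real.exp (-(q i j * s))) := by
            simp only [Finset.sum_sub_distrib, ← Finset.mul_sum]
        _ ≤ 0 := by
            rw [dsum_mul c c, hc]
            nlinarith [mul_nonneg hsp hexp]
    have hfin : (∑ i, ∑ j, c i * c j * q i j ^ γ) * J ≤ 0 := key ▸ hnonpos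
    nlinarith [hfin, hJ]

/-- For `0 < α ≤ p ≤ 2`, the function `F(t) = exp(−t^α)` is radial
positive definite on `ℓ^p`: for sequences `x₁,…,xₙ ∈ ℓ^p`, the matrix with entries
`exp(−‖x_i − x_j‖_p^α)` is positive semidefinite. -/
theorem exp_rpow_radial_posdef_lp (p α : ℝ) (hα : 0 < α) (hαp : α ≤ p) (hp2 : p ≤ 2)
    (n : ℕ) (hn : 1 ≤ n) (x : Fin n → ℕ → ℝ)
    (hx : ∀ i, Summable (fun t => |x i t| ^ p)) (c : Fin n → ℝ) :
    0 ≤ ∑ i, ∑ j, c i * c j *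
      Real.exp (-(((∑' t, |x i t - x j t| ^ p) ^ (1 / p)) ^ α)) := by
  have hp0 : 0 < p := lt_of_lt_of_le hα hαp
  set q : Fin n → Fin n → ℝ := fun i j => ∑' t, |x i t - x j t| ^ p with hqdef
  have hq0 : ∀ i j, 0 ≤ q i j :=
    fun i j => tsum_nonneg fun t => Real.rpow_nonneg (abs_nonneg _) _
  have hqs : ∀ i j, q i j = q j i := by
    intro i j
    simp only [hqdef]
    exact tsum_congr fun t => by rw [abs_sub_comm]
  have hqd : ∀ i, q i i = 0 := by
    intro i
    simp [hqdef, Real.zero_rpow hp0.ne']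
  set γ : ℝ := α / p with hγdef
  have hγ0 : 0 < γ := div_pos hα hp0
  have hγ1 : γ ≤ 1 := (div_le_one hp0).mpr hαp
  have hrw : ∀ i j, ((q i j) ^ (1 / p)) ^ α = q i j ^ γ := by
    intro i j
    rw [← Real.rpow_mul (hq0 i j), hγdef, one_div, div_eq_inv_mul]
  have hψs : ∀ i j, q i j ^ γ = q j i ^ γ := fun i j => by rw [hqs i j]
  have hψd : ∀ i, q i i ^ γ = 0 := fun i => by
    rw [hqd i, Real.zero_rpow hγ0.ne']
  have hψnd : ∀ c' : Fin n → ℝ, ∑ i, c' i = 0 →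
      ∑ i, ∑ j, c' i * c' j * q i j ^ γ ≤ 0 :=
    fun c' hc' => nd_power hn γ hγ0 hγ1 q hq0 hqs hqd
      (fun c'' hc'' => nd_lp p hp0 hp2 x hx c'' hc'') c' hc'
  have := schoenbergK hn (fun i j => q i j ^ γ) hψs hψd hψnd c
  calc (0:ℝ) ≤ ∑ i, ∑ j, c i * c j * Real.exp (-(q i j ^ γ)) := this
    _ = ∑ i, ∑ j, c i * c j * Real.exp (-(((∑' t, |x i t - x j t| ^ p) ^ (1 / p)) ^ α)) :=
      Finset.sum_congr rfl fun i _ => Finset.sum_congr rfl fun j _ => by rw [hrw i j]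
end

section
/- Let 0 < q ≤ p ≤ 2. On the set of sequences x : ℕ → ℝ with ∑_t |x(t)|^p < ∞, the function ρ(x,y) = ‖x − y‖_p^q, where ‖x − y‖_p = (∑_t |x(t) − y(t)|^p)^{1/p}, is a semi-metric of negative type: for every n ≥ 2, all x₁,…,xₙ and all real α₁,…,αₙ with ∑_i α_i = 0, one has ∑_{i=1}^n ∑_{j=1}^n α_i α_j ‖x_i − x_j‖_p^q ≤ 0. -/
open MeasureTheory Set Finset Matrix

namespace NegTypeAux

variable {n : ℕ}

/-- quadratic form of a kernel -/
def Q (K : Fin n → Fin n → ℝ) (a : Fin n → ℝ) : ℝ := ∑ i, ∑ j, a i * a j * K i j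

lemma gram_of_psd {K : Fin n → Fin n → ℝ} (hsym : ∀ i j, K i j = K j i)
    (hpsd : ∀ a, 0 ≤ Q K a) :
    ∃ B : Fin n → Fin n → ℝ, ∀ i j, K i j = ∑ k, B k i * B k j := by
  have hH : (Matrix.of K).PosSemidef := by
    refine Matrix.PosSemidef.of_dotProduct_mulVec_nonneg ?_ ?_
    · ext i j
      simp [Matrix.conjTranspose_apply, hsym i j]
    · intro v
      have := hpsd v
      unfold Q at this
      simpa [dotProduct, Matrix.mulVec, dotProduct, Finset.mul_sum,
        mul_assoc, mul_comm, mul_left_comm] using this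
  open scoped MatrixOrder in obtain ⟨B, hB⟩ := CStarAlgebra.nonneg_iff_eq_star_mul_self.mp hH.nonneg
  refine ⟨fun k i => B k i, fun i j => ?_⟩
  have : (Matrix.of K) i j = (Bᴴ * B) i j := by rw [hB]; rfl
  simpa [Matrix.mul_apply, Matrix.conjTranspose_apply] using this

/-- Schur product: pointwise product of PSD kernels is PSD. -/
lemma Q_mul_nonneg {K L : Fin n → Fin n → ℝ} (hsym : ∀ i j, K i j = K j i)
    (hK : ∀ a, 0 ≤ Q K a) (hL : ∀ a, 0 ≤ Q L a) (a : Fin n → ℝ) :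
    0 ≤ Q (fun i j => K i j * L i j) a := by
  obtain ⟨B, hB⟩ := gram_of_psd hsym hK
  have key : Q (fun i j => K i j * L i j) a = ∑ k, Q L (fun i => a i * B k i) := by
    have h0 : ∀ i j, a i * a j * (K i j * L i j)
        = ∑ k, (a i * B k i) * (a j * B k j) * L i j := by
      intro i j
      rw [hB i j, Finset.sum_mul, Finset.mul_sum]
      exact Finset.sum_congr rfl fun k _ => by ring
    calc Q (fun i j => K i j * L i j) a
        = ∑ i, ∑ j, ∑ k, (a i * B k i) * (a j * B k j) * L i j :=
          Finset.sum_congr rfl fun i _ => Finset.sum_congr rfl fun j _ => h0 i j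
      _ = ∑ i, ∑ k, ∑ j, (a i * B k i) * (a j * B k j) * L i j :=
          Finset.sum_congr rfl fun i _ => by rw [Finset.sum_comm]
      _ = ∑ k, ∑ i, ∑ j, (a i * B k i) * (a j * B k j) * L i j := by rw [Finset.sum_comm]
      _ = ∑ k, Q L (fun i => a i * B k i) := rfl
  rw [key]
  exact Finset.sum_nonneg fun k _ => hL _

lemma Q_pow_nonneg {K : Fin n → Fin n → ℝ} (hsym : ∀ i j, K i j = K j i)
    (hK : ∀ a, 0 ≤ Q K a) (m : ℕ) : ∀ a, 0 ≤ Q (fun i j => K i j ^ m) a := by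
  induction m with
  | zero =>
      intro a
      have h : Q (fun i j => K i j ^ 0) a = (∑ i, a i) ^ 2 := by
        unfold Q
        simp only [pow_zero, mul_one, sq, Finset.sum_mul_sum]
      rw [h]; positivity
  | succ m ih =>
      intro a
      have h : (fun i j => K i j ^ (m + 1)) = fun i j => K i j * K i j ^ m := by
        funext i j; ring
      rw [h]
      exact Q_mul_nonneg hsym hK ih a

lemma Q_exp_nonneg {K : Fin n → Fin n → ℝ} (hsym : ∀ i j, K i j = K j i)
    (hK : ∀ a, 0 ≤ Q K a) (a : Fin n → ℝ) :
    0 ≤ Q (fun i j => Real.exp (K i j)) a := by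
  have hexp : ∀ u : ℝ, Real.exp u = ∑' m : ℕ, u ^ m / (m.factorial : ℝ) := by
    intro u
    rw [Real.exp_eq_exp_ℝ, NormedSpace.exp_eq_tsum_div]
  have hsummable : ∀ i j, Summable (fun m : ℕ => a i * a j * (K i j ^ m / (m.factorial : ℝ))) :=
    fun i j => (Real.summable_pow_div_factorial (K i j)).mul_left _
  have key : Q (fun i j => Real.exp (K i j)) a
      = ∑' m : ℕ, (1 / (m.factorial : ℝ)) * Q (fun i j => K i j ^ m) a := by
    unfold Q
    calc ∑ i, ∑ j, a i * a j * Real.exp (K i j)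
        = ∑ i, ∑ j, ∑' m : ℕ, a i * a j * (K i j ^ m / (m.factorial : ℝ)) := by
          refine Finset.sum_congr rfl fun i _ => Finset.sum_congr rfl fun j _ => ?_
          rw [hexp, ← tsum_mul_left]
      _ = ∑ i, ∑' m : ℕ, ∑ j, a i * a j * (K i j ^ m / (m.factorial : ℝ)) :=
          Finset.sum_congr rfl fun i _ => (Summable.tsum_finsetSum (fun j _ => hsummable i j)).symm
      _ = ∑' m : ℕ, ∑ i, ∑ j, a i * a j * (K i j ^ m / (m.factorial : ℝ)) :=
          (Summable.tsum_finsetSum (fun i _ => summable_sum (fun j _ => hsummable i j))).symm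
      _ = ∑' m : ℕ, (1 / (m.factorial : ℝ)) * Q (fun i j => K i j ^ m) a := by
          refine tsum_congr fun m => ?_
          unfold Q
          rw [Finset.mul_sum]
          refine Finset.sum_congr rfl fun i _ => ?_
          rw [Finset.mul_sum]
          exact Finset.sum_congr rfl fun j _ => by ring
  rw [key]
  refine tsum_nonneg fun m => ?_
  have h := Q_pow_nonneg hsym hK m a
  positivity

lemma sum_shift (b : Fin n → ℝ) (s : ℝ) (i0 : Fin n) (g : Fin n → ℝ) :
    ∑ i, (b i - if i = i0 then s else 0) * g i = (∑ i, b i * g i) - s * g i0 := by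
  have h : ∀ i ∈ Finset.univ, (b i - if i = i0 then s else 0) * g i
      = b i * g i - (if i = i0 then s * g i else 0) := by
    intro i _
    by_cases hi : i = i0 <;> simp [hi] <;> ring
  rw [Finset.sum_congr rfl h, Finset.sum_sub_distrib, Finset.sum_ite_eq' Finset.univ i0]
  simp

/-- Schoenberg: if `M` is symmetric, zero-diagonal (at `i0`) and of negative type, then
`exp (-M)` is positive semidefinite. -/
lemma Q_exp_neg_nonneg {M : Fin n → Fin n → ℝ} (i0 : Fin n)
    (hsym : ∀ i j, M i j = M j i) (hdiag : M i0 i0 = 0)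
    (hneg : ∀ b : Fin n → ℝ, (∑ i, b i) = 0 → Q M b ≤ 0) (a : Fin n → ℝ) :
    0 ≤ Q (fun i j => Real.exp (-M i j)) a := by
  classical
  set K : Fin n → Fin n → ℝ := fun i j => M i i0 + M j i0 - M i j with hKdef
  have hKsym : ∀ i j, K i j = K j i := by
    intro i j; simp only [hKdef]; rw [hsym i j]; ring
  have hKpsd : ∀ b : Fin n → ℝ, 0 ≤ Q K b := by
    intro b
    set s : ℝ := ∑ i, b i with hs
    set c : Fin n → ℝ := fun i => b i - if i = i0 then s else 0 with hc
    have hcsum : (∑ i, c i) = 0 := by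
      simp only [hc]
      rw [Finset.sum_sub_distrib, Finset.sum_ite_eq' Finset.univ i0]
      simp [hs]
    have hQc := hneg c hcsum
    have hshift : ∀ g : Fin n → ℝ, ∑ i, c i * g i = (∑ i, b i * g i) - s * g i0 := by
      intro g
      simp only [hc, sub_mul, ite_mul, zero_mul]
      rw [Finset.sum_sub_distrib, Finset.sum_ite_eq' Finset.univ i0]
      simp
    set T : ℝ := ∑ i, b i * M i i0 with hT
    -- Q M c = Q M b - 2 s T
    have hstep1 : ∀ i, ∑ j, c i * c j * M i j = c i * ((∑ j, b j * M i j) - s * M i i0) := by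
      intro i
      have h1 : ∑ j, c i * c j * M i j = ∑ j, c j * (c i * M i j) :=
        Finset.sum_congr rfl fun j _ => by ring
      rw [h1, hshift (fun j => c i * M i j), mul_sub, Finset.mul_sum]
      congr 1
      · exact Finset.sum_congr rfl fun j _ => by ring
      · ring
    have hQMc : Q M c = Q M b - 2 * s * T := by
      unfold Q
      rw [Finset.sum_congr rfl (fun i _ => hstep1 i)]
      have h2 : ∑ i, c i * ((∑ j, b j * M i j) - s * M i i0)
          = (∑ i, b i * ((∑ j, b j * M i j) - s * M i i0))
            - s * ((∑ j, b j * M i0 j) - s * M i0 i0) := by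
        exact hshift _
      rw [h2, hdiag]
      have h3 : (∑ j, b j * M i0 j) = T := by
        rw [hT]
        exact Finset.sum_congr rfl fun j _ => by rw [hsym i0 j]
      rw [h3]
      have h4 : (∑ i, b i * ((∑ j, b j * M i j) - s * M i i0))
          = (∑ i, ∑ j, b i * b j * M i j) - s * T := by
        have h5 : ∀ i ∈ Finset.univ, b i * ((∑ j, b j * M i j) - s * M i i0)
            = (∑ j, b i * b j * M i j) - s * (b i * M i i0) := by
          intro i _
          rw [mul_sub, Finset.mul_sum]
          congr 1
          · exact Finset.sum_congr rfl fun j _ => by ring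
          · ring
        rw [Finset.sum_congr rfl h5, Finset.sum_sub_distrib, ← Finset.mul_sum, hT]
      rw [h4]
      ring
    -- Q K b = 2 s T - Q M b
    have hQKb : Q K b = 2 * s * T - Q M b := by
      unfold Q
      have h6 : ∀ i ∈ Finset.univ, ∑ j, b i * b j * K i j
          = (b i * M i i0) * s + b i * T - ∑ j, b i * b j * M i j := by
        intro i _
        have h7 : ∀ j ∈ Finset.univ, b i * b j * K i j
            = (b i * M i i0) * b j + b i * (b j * M j i0) - b i * b j * M i j := by
          intro j _
          simp only [hKdef]
          ring
        rw [Finset.sum_congr rfl h7, Finset.sum_sub_distrib, Finset.sum_add_distrib,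
          ← Finset.mul_sum, ← Finset.mul_sum, ← hs, ← hT]
      rw [Finset.sum_congr rfl h6, Finset.sum_sub_distrib, Finset.sum_add_distrib,
        ← Finset.sum_mul, ← Finset.sum_mul, ← hT, ← hs]
      ring
    rw [hQKb]
    rw [hQMc] at hQc
    linarith
  -- now conclude
  have hfinal : Q (fun i j => Real.exp (-M i j)) a
      = Q (fun i j => Real.exp (K i j)) (fun i => a i * Real.exp (-M i i0)) := by
    unfold Q
    refine Finset.sum_congr rfl fun i _ => Finset.sum_congr rfl fun j _ => ?_
    have h8 : -M i j = -M i i0 + -M j i0 + K i j := by simp only [hKdef]; ring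
    show a i * a j * Real.exp (-M i j)
        = (a i * Real.exp (-M i i0)) * (a j * Real.exp (-M j i0)) * Real.exp (K i j)
    rw [h8, Real.exp_add, Real.exp_add]
    ring
  rw [hfinal]
  exact Q_exp_nonneg hKsym hKpsd _

noncomputable def cNeg (θ : ℝ) : ℝ := ∫ l in Set.Ioi (0:ℝ), (1 - Real.exp (-l)) * l ^ (-1-θ)

lemma aux_meas (u θ : ℝ) :
    AEStronglyMeasurable (fun l : ℝ => (1 - Real.exp (-(u*l))) * l ^ (-1-θ))
      (volume.restrict (Set.Ioi 0)) := by
  apply Measurable.aestronglyMeasurable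
  exact (measurable_const.sub ((measurable_const.mul measurable_id).neg.exp)).mul
    (measurable_id.pow_const _)

lemma aux_nonneg {u θ l : ℝ} (hu : 0 ≤ u) (hl : 0 < l) :
    0 ≤ (1 - Real.exp (-(u*l))) * l ^ (-1-θ) := by
  apply mul_nonneg
  · rw [sub_nonneg, Real.exp_le_one_iff]
    have : 0 ≤ u * l := mul_nonneg hu hl.le
    linarith
  · positivity

lemma aux_integrable {θ : ℝ} (hθ : 0 < θ) (hθ1 : θ < 1) {u : ℝ} (hu : 0 ≤ u) :
    MeasureTheory.IntegrableOn (fun l : ℝ => (1 - Real.exp (-(u*l))) * l ^ (-1-θ))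
      (Set.Ioi 0) := by
  have hsplit : Set.Ioc (0:ℝ) 1 ∪ Set.Ioi 1 = Set.Ioi 0 := Set.Ioc_union_Ioi_eq_Ioi zero_le_one
  rw [← hsplit]
  apply MeasureTheory.IntegrableOn.union
  · -- on (0,1] : dominate by u * l ^ (-θ)
    have hg : MeasureTheory.IntegrableOn (fun l : ℝ => u * l ^ (-θ)) (Set.Ioc 0 1) := by
      apply MeasureTheory.Integrable.const_mul
      have := (intervalIntegral.intervalIntegrable_rpow' (a := 0) (b := 1)
        (show (-1:ℝ) < -θ by linarith)).1
      exact (by simpa using this : MeasureTheory.IntegrableOn (fun l : ℝ => l ^ (-θ)) (Set.Ioc 0 1))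
    refine MeasureTheory.Integrable.mono' hg
      ((aux_meas u θ).mono_measure (Measure.restrict_mono Set.Ioc_subset_Ioi_self le_rfl)) ?_
    refine (MeasureTheory.ae_restrict_iff' measurableSet_Ioc).2 (Filter.Eventually.of_forall ?_)
    intro l hl
    have hl0 : 0 < l := hl.1
    have h1 : 0 ≤ (1 - Real.exp (-(u*l))) * l ^ (-1-θ) := aux_nonneg hu hl0
    rw [Real.norm_eq_abs, abs_of_nonneg h1]
    have h2 : 1 - Real.exp (-(u*l)) ≤ u * l := by
      have := Real.add_one_le_exp (-(u*l))
      linarith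
    have h3 : (1 - Real.exp (-(u*l))) * l ^ (-1-θ) ≤ (u * l) * l ^ (-1-θ) := by
      apply mul_le_mul_of_nonneg_right h2 (by positivity)
    refine h3.trans (le_of_eq ?_)
    rw [mul_assoc]
    congr 1
    rw [show l * l ^ (-1-θ) = l ^ (1:ℝ) * l ^ (-1-θ) by rw [Real.rpow_one],
      ← Real.rpow_add hl0]
    ring_nf
  · -- on (1,∞) : dominate by l ^ (-1-θ)
    have hg : MeasureTheory.IntegrableOn (fun l : ℝ => l ^ (-1-θ)) (Set.Ioi 1) :=
      integrableOn_Ioi_rpow_of_lt (by linarith) one_pos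
    refine MeasureTheory.Integrable.mono' hg
      ((aux_meas u θ).mono_measure (Measure.restrict_mono (Set.Ioi_subset_Ioi zero_le_one) le_rfl)) ?_
    refine (MeasureTheory.ae_restrict_iff' measurableSet_Ioi).2 (Filter.Eventually.of_forall ?_)
    intro l hl
    have hl0 : (0:ℝ) < l := lt_trans one_pos hl
    have h1 : 0 ≤ (1 - Real.exp (-(u*l))) * l ^ (-1-θ) := aux_nonneg hu hl0
    rw [Real.norm_eq_abs, abs_of_nonneg h1]
    have h2 : 1 - Real.exp (-(u*l)) ≤ 1 := by
      have := Real.exp_pos (-(u*l)); linarith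
    calc (1 - Real.exp (-(u*l))) * l ^ (-1-θ) ≤ 1 * l ^ (-1-θ) :=
          mul_le_mul_of_nonneg_right h2 (by positivity)
      _ = l ^ (-1-θ) := one_mul _

lemma aux_integral {θ : ℝ} (hθ : 0 < θ) {u : ℝ} (hu : 0 ≤ u) :
    ∫ l in Set.Ioi (0:ℝ), (1 - Real.exp (-(u*l))) * l ^ (-1-θ) = u ^ θ * cNeg θ := by
  rcases eq_or_lt_of_le hu with h0 | hu'
  · rw [← h0]
    simp [Real.zero_rpow hθ.ne']
  · have key : ∀ l ∈ Set.Ioi (0:ℝ), (1 - Real.exp (-(u*l))) * l ^ (-1-θ)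
        = u ^ (1+θ) * ((1 - Real.exp (-(u*l))) * (u*l) ^ (-1-θ)) := by
      intro l hl
      rw [Real.mul_rpow hu (le_of_lt hl)]
      have h2 : u ^ (1+θ) * u ^ (-1-θ) = 1 := by
        rw [← Real.rpow_add hu']; norm_num
      linear_combination (-(1 - Real.exp (-(u*l))) * l ^ (-1-θ)) * h2
    rw [MeasureTheory.setIntegral_congr_fun measurableSet_Ioi key,
      MeasureTheory.integral_const_mul]
    have := MeasureTheory.integral_comp_mul_left_Ioi
      (fun l => (1 - Real.exp (-l)) * l ^ (-1-θ)) 0 hu'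
    rw [mul_zero] at this
    rw [this, smul_eq_mul, ← cNeg]
    rw [← mul_assoc]
    congr 1
    rw [← Real.rpow_neg_one u, ← Real.rpow_add hu']
    congr 1
    ring

lemma cNeg_pos {θ : ℝ} (hθ : 0 < θ) (hθ1 : θ < 1) : 0 < cNeg θ := by
  have hint : MeasureTheory.IntegrableOn (fun l : ℝ => (1 - Real.exp (-l)) * l ^ (-1-θ))
      (Set.Ioi 0) := by
    have := aux_integrable hθ hθ1 (zero_le_one (α := ℝ))
    simpa using this
  rw [cNeg, MeasureTheory.setIntegral_pos_iff_support_of_nonneg_ae]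
  · refine lt_of_lt_of_le ?_ (measure_mono (?_ : Set.Ioi (0:ℝ) ⊆ _))
    · rw [Real.volume_Ioi]; exact ENNReal.zero_lt_top
    · intro l hl
      refine ⟨?_, hl⟩
      simp only [Function.mem_support]
      have h1 : 0 < 1 - Real.exp (-l) := by
        have : Real.exp (-l) < 1 := by
          rw [Real.exp_lt_one_iff]; simpa using hl
        linarith
      have h2 : (0:ℝ) < l ^ (-1-θ) := Real.rpow_pos_of_pos hl _
      positivity
  · refine (MeasureTheory.ae_restrict_iff' measurableSet_Ioi).2 (Filter.Eventually.of_forall ?_)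
    intro l hl
    have := aux_nonneg (u := 1) (θ := θ) zero_le_one (hl : (0:ℝ) < l)
    simpa using this
  · exact hint

lemma Q_scale (M : Fin n → Fin n → ℝ) (l : ℝ) (b : Fin n → ℝ) :
    Q (fun i j => M i j * l) b = Q M b * l := by
  unfold Q
  rw [Finset.sum_mul]
  refine Finset.sum_congr rfl fun i _ => ?_
  rw [Finset.sum_mul]
  exact Finset.sum_congr rfl fun j _ => by ring

/-- fractional powers preserve negative type -/
lemma Q_rpow_neg {M : Fin n → Fin n → ℝ} (i0 : Fin n) {θ : ℝ} (hθ : 0 < θ) (hθ1 : θ < 1)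
    (hsym : ∀ i j, M i j = M j i) (hdiag : ∀ i, M i i = 0) (hnn : ∀ i j, 0 ≤ M i j)
    (hneg : ∀ b : Fin n → ℝ, (∑ i, b i) = 0 → Q M b ≤ 0)
    (a : Fin n → ℝ) (ha : (∑ i, a i) = 0) :
    ∑ i, ∑ j, a i * a j * (M i j) ^ θ ≤ 0 := by
  have hc := cNeg_pos hθ hθ1
  have hc' : (cNeg θ) ≠ 0 := hc.ne'
  set g : Fin n → Fin n → ℝ → ℝ :=
    fun i j l => a i * a j * ((1 - Real.exp (-(M i j * l))) * l ^ (-1-θ)) with hg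
  have hgint : ∀ i j, MeasureTheory.IntegrableOn (g i j) (Set.Ioi 0) := fun i j =>
    (aux_integrable hθ hθ1 (hnn i j)).const_mul _
  have key : ∑ i, ∑ j, a i * a j * (M i j) ^ θ
      = (cNeg θ)⁻¹ * ∑ i, ∑ j, ∫ l in Set.Ioi (0:ℝ), g i j l := by
    rw [Finset.mul_sum]
    refine Finset.sum_congr rfl fun i _ => ?_
    rw [Finset.mul_sum]
    refine Finset.sum_congr rfl fun j _ => ?_
    simp only [hg]
    rw [MeasureTheory.integral_const_mul, aux_integral hθ (hnn i j)]
    field_simp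
  rw [key]
  have hswap : ∑ i, ∑ j, ∫ l in Set.Ioi (0:ℝ), g i j l
      = ∫ l in Set.Ioi (0:ℝ), ∑ i, ∑ j, g i j l := by
    rw [MeasureTheory.integral_finset_sum _ (fun i _ =>
      MeasureTheory.integrable_finset_sum _ (fun j _ => hgint i j))]
    exact Finset.sum_congr rfl fun i _ =>
      (MeasureTheory.integral_finset_sum _ (fun j _ => hgint i j)).symm
  rw [hswap]
  have hptwise : ∀ l ∈ Set.Ioi (0:ℝ), (∑ i, ∑ j, g i j l) ≤ 0 := by
    intro l hl
    have hl0 : (0:ℝ) < l := hl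
    have hE : 0 ≤ Q (fun i j => Real.exp (-(M i j * l))) a := by
      refine Q_exp_neg_nonneg i0 (fun i j => by rw [hsym i j]) (by rw [hdiag]; ring) ?_ a
      intro b hb
      rw [Q_scale]
      exact mul_nonpos_of_nonpos_of_nonneg (hneg b hb) hl0.le
    have hsum1 : ∑ i, ∑ j, g i j l
        = (Q (fun i j => (1:ℝ)) a - Q (fun i j => Real.exp (-(M i j * l))) a) * l ^ (-1-θ) := by
      unfold Q
      rw [sub_mul, Finset.sum_mul, Finset.sum_mul, ← Finset.sum_sub_distrib]
      refine Finset.sum_congr rfl fun i _ => ?_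
      rw [Finset.sum_mul, Finset.sum_mul, ← Finset.sum_sub_distrib]
      exact Finset.sum_congr rfl fun j _ => by simp only [hg]; ring
    have hQ1 : Q (fun _ _ => (1:ℝ)) a = 0 := by
      unfold Q
      simp only [mul_one]
      rw [← Finset.sum_mul_sum]
      rw [ha, zero_mul]
    rw [hsum1, hQ1]
    apply mul_nonpos_of_nonpos_of_nonneg
    · linarith
    · positivity
  have hneg' : (∫ l in Set.Ioi (0:ℝ), ∑ i, ∑ j, g i j l) ≤ 0 :=
    MeasureTheory.setIntegral_nonpos measurableSet_Ioi hptwise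
  exact mul_nonpos_of_nonneg_of_nonpos (by positivity) hneg'

lemma sq_negtype (s : Fin n → ℝ) (a : Fin n → ℝ) (ha : (∑ i, a i) = 0) :
    ∑ i, ∑ j, a i * a j * (s i - s j) ^ 2 ≤ 0 := by
  have h1 : ∀ i ∈ Finset.univ, ∑ j, a i * a j * (s i - s j) ^ 2
      = a i * s i ^ 2 * (∑ j, a j) + a i * (∑ j, a j * s j ^ 2)
        - 2 * (a i * s i) * (∑ j, a j * s j) := by
    intro i _
    rw [Finset.mul_sum, Finset.mul_sum, Finset.mul_sum, ← Finset.sum_add_distrib,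
      ← Finset.sum_sub_distrib]
    exact Finset.sum_congr rfl fun j _ => by ring
  rw [Finset.sum_congr rfl h1]
  simp only [ha, mul_zero, zero_add]
  rw [Finset.sum_sub_distrib, ← Finset.sum_mul, ← Finset.sum_mul, ha]
  have h2 : (∑ i, 2 * (a i * s i)) = 2 * ∑ i, a i * s i := by
    rw [Finset.mul_sum]
  rw [h2]
  nlinarith [sq_nonneg (∑ i, a i * s i)]

/-- negative type of `|s i - s j| ^ p` on ℝ, for `0 < p ≤ 2` (real exponent). -/
lemma abs_rpow_negtype (i0 : Fin n) {p : ℝ} (hp : 0 < p) (hp2 : p ≤ 2) (s : Fin n → ℝ)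
    (a : Fin n → ℝ) (ha : (∑ i, a i) = 0) :
    ∑ i, ∑ j, a i * a j * |s i - s j| ^ p ≤ 0 := by
  have habs : ∀ i j, |s i - s j| ^ p = ((s i - s j) ^ 2) ^ (p / 2) := by
    intro i j
    rw [← sq_abs, ← Real.rpow_natCast |s i - s j| 2, ← Real.rpow_mul (abs_nonneg _)]
    norm_num
    congr 1
    ring
  simp only [habs]
  rcases eq_or_lt_of_le hp2 with h2 | h2
  · -- p = 2
    have : ∀ i j, (((s i - s j) ^ 2 : ℝ)) ^ (p / 2) = (s i - s j) ^ 2 := by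
      intro i j
      rw [← h2, show (p/p) = (1:ℝ) from div_self (by linarith), Real.rpow_one]
    simp only [this]
    exact sq_negtype s a ha
  · exact Q_rpow_neg i0 (by linarith) (by linarith)
      (fun i j => by ring) (fun i => by ring) (fun i j => sq_nonneg _)
      (fun b hb => sq_negtype s b hb) a ha

lemma abs_sub_rpow_le {p : ℝ} (hp : 0 < p) (A B : ℝ) :
    |A - B| ^ p ≤ 2 ^ p * (|A| ^ p + |B| ^ p) := by
  have h1 : |A - B| ≤ 2 * max |A| |B| := by
    have := abs_sub A B
    have h2 : |A| ≤ max |A| |B| := le_max_left _ _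
    have h3 : |B| ≤ max |A| |B| := le_max_right _ _
    calc |A - B| ≤ |A| + |B| := abs_sub _ _
      _ ≤ 2 * max |A| |B| := by linarith
  calc |A - B| ^ p ≤ (2 * max |A| |B|) ^ p :=
        Real.rpow_le_rpow (abs_nonneg _) h1 hp.le
    _ = 2 ^ p * (max |A| |B|) ^ p := Real.mul_rpow (by norm_num) (le_max_of_le_left (abs_nonneg _))
    _ ≤ 2 ^ p * (|A| ^ p + |B| ^ p) := by
        apply mul_le_mul_of_nonneg_left _ (by positivity)
        rcases max_cases |A| |B| with ⟨h, _⟩ | ⟨h, _⟩ <;> rw [h]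
        · nlinarith [Real.rpow_nonneg (abs_nonneg B) p]
        · nlinarith [Real.rpow_nonneg (abs_nonneg A) p]

end NegTypeAux

/-- For `0 < q ≤ p ≤ 2`, the function `ρ(x,y) = ‖x − y‖_p^q` is a
semi-metric of negative type on `ℓ^p`. -/
theorem lp_norm_pow_negtype (p q : ℝ) (hq : 0 < q) (hqp : q ≤ p) (hp2 : p ≤ 2)
    (n : ℕ) (hn : 2 ≤ n) (x : Fin n → ℕ → ℝ)
    (hx : ∀ i, Summable (fun t => |x i t| ^ p))
    (a : Fin n → ℝ) (ha : (∑ i, a i) = 0) :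
    ∑ i, ∑ j, a i * a j * ((∑' t, |x i t - x j t| ^ p) ^ (1 / p)) ^ q ≤ 0 := by
  classical
  have hp : 0 < p := lt_of_lt_of_le hq hqp
  have i0 : Fin n := ⟨0, by omega⟩
  set N : Fin n → Fin n → ℝ := fun i j => ∑' t, |x i t - x j t| ^ p with hN
  have hsummable : ∀ i j, Summable (fun t => |x i t - x j t| ^ p) := by
    intro i j
    refine Summable.of_nonneg_of_le (fun t => Real.rpow_nonneg (abs_nonneg _) p)
      (fun t => NegTypeAux.abs_sub_rpow_le hp _ _) ?_
    exact ((hx i).add (hx j)).mul_left _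
  have hNnn : ∀ i j, 0 ≤ N i j := fun i j =>
    tsum_nonneg fun t => Real.rpow_nonneg (abs_nonneg _) _
  have hNsym : ∀ i j, N i j = N j i := fun i j =>
    tsum_congr fun t => by rw [abs_sub_comm]
  have hNdiag : ∀ i, N i i = 0 := by
    intro i
    simp [hN, Real.zero_rpow hp.ne']
  have hNneg : ∀ b : Fin n → ℝ, (∑ i, b i) = 0 → ∑ i, ∑ j, b i * b j * N i j ≤ 0 := by
    intro b hb
    have hbsummable : ∀ i j, Summable (fun t => b i * b j * |x i t - x j t| ^ p) :=
      fun i j => (hsummable i j).mul_left _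
    have hswap : ∑ i, ∑ j, b i * b j * N i j
        = ∑' t : ℕ, ∑ i, ∑ j, b i * b j * |x i t - x j t| ^ p := by
      calc ∑ i, ∑ j, b i * b j * N i j
          = ∑ i, ∑ j, ∑' t : ℕ, b i * b j * |x i t - x j t| ^ p := by
            refine Finset.sum_congr rfl fun i _ => Finset.sum_congr rfl fun j _ => ?_
            rw [hN, ← tsum_mul_left]
        _ = ∑ i, ∑' t : ℕ, ∑ j, b i * b j * |x i t - x j t| ^ p :=
            Finset.sum_congr rfl fun i _ => (Summable.tsum_finsetSum (fun j _ => hbsummable i j)).symm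
        _ = ∑' t : ℕ, ∑ i, ∑ j, b i * b j * |x i t - x j t| ^ p :=
            (Summable.tsum_finsetSum (fun i _ => summable_sum (fun j _ => hbsummable i j))).symm
    rw [hswap]
    refine tsum_nonpos fun t => ?_
    exact NegTypeAux.abs_rpow_negtype i0 hp hp2 (fun i => x i t) b hb
  have hform : ∀ i j, ((N i j) ^ (1/p)) ^ q = N i j ^ (q / p) := by
    intro i j
    rw [← Real.rpow_mul (hNnn i j)]
    congr 1
    field_simp
  simp only [show ∀ i j, ((∑' t, |x i t - x j t| ^ p) ^ (1/p)) ^ q = N i j ^ (q / p) from hform]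
  rcases eq_or_lt_of_le hqp with hqp' | hqp'
  · have h1 : ∀ i j, N i j ^ (q / p) = N i j := by
      intro i j
      rw [hqp', div_self hp.ne', Real.rpow_one]
    simp only [h1]
    exact hNneg a ha
  · exact NegTypeAux.Q_rpow_neg i0 (by positivity) ((div_lt_one hp).2 hqp')
      hNsym hNdiag hNnn (fun b hb => hNneg b hb) a ha
end
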